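/- arXiv:1602.03611 — 4 statements merged into one kernel-verified Lean document; each statement's English description precedes it below -/
import Mathlib

section
/- For real q with -1 < q < 1 and complex x with |x| < 1, the sum over n ≥ 0 of x^n / ((1-q)(1-q^2)···(1-q^n)) equals the infinite product over k ≥ 0 of 1/(1 - x q^k). -/
open Filter Finset Complex

/-- partial q-Pochhammer denominator -/
noncomputable def euP (q : ℝ) (n : ℕ) : ℂ := ∏ k ∈ Finset.range n, (1 - (q : ℂ) ^ (k + 1))

lemma eu_norm_pow (q : ℝ) (k : ℕ) : ‖(q : ℂ) ^ k‖ = |q| ^ k := by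
  rw [norm_pow, Complex.norm_real, Real.norm_eq_abs]

lemma eu_hne {q : ℝ} (hr : |q| < 1) (k : ℕ) : (1 : ℂ) - (q : ℂ) ^ (k + 1) ≠ 0 := by
  intro h
  have h1 : (q : ℂ) ^ (k + 1) = 1 := by linear_combination -h
  have h2 := eu_norm_pow q (k + 1)
  rw [h1] at h2
  simp only [norm_one] at h2
  have h3 : |q| ^ (k + 1) < 1 := pow_lt_one₀ (abs_nonneg q) hr (Nat.succ_ne_zero k)
  linarith [h2, h3]

/-- summability of norms of logs of the factors -/
lemma eu_sl {q : ℝ} (hr : |q| < 1) :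
    Summable fun k => ‖Complex.log (1 - (q : ℂ) ^ (k + 1))‖ := by
  have h0 : (0:ℝ) ≤ |q| := abs_nonneg q
  apply Summable.of_norm_bounded_eventually_nat (g := fun k => (3/2 * |q|) * |q| ^ k)
    (((summable_geometric_of_lt_one h0 hr).mul_left _))
  have hev : ∀ᶠ k : ℕ in atTop, |q| ^ k ≤ 1/2 := by
    have := tendsto_pow_atTop_nhds_zero_of_lt_one h0 hr
    exact this.eventually (eventually_le_nhds (by norm_num))
  filter_upwards [hev] with k hk
  rw [norm_norm]
  have hk1 : |q| ^ (k + 1) ≤ 1/2 := by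
    calc |q| ^ (k+1) ≤ |q| ^ k := pow_le_pow_of_le_one h0 hr.le (Nat.le_succ k)
    _ ≤ 1/2 := hk
  have hb : ‖Complex.log (1 + -((q:ℂ) ^ (k+1)))‖ ≤ 3/2 * ‖-((q:ℂ)^(k+1))‖ :=
    Complex.norm_log_one_add_half_le_self (by rw [norm_neg, eu_norm_pow]; exact hk1)
  rw [show (1:ℂ) + -((q:ℂ)^(k+1)) = 1 - (q:ℂ)^(k+1) by ring] at hb
  rw [norm_neg, eu_norm_pow] at hb
  calc ‖Complex.log (1 - (q:ℂ)^(k+1))‖ ≤ 3/2 * |q| ^ (k+1) := hb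
  _ = 3/2 * |q| * |q| ^ k := by ring

/-- the partial products are exponentials of partial log sums -/
lemma eu_Pexp {q : ℝ} (hr : |q| < 1) (n : ℕ) :
    euP q n = Complex.exp (∑ k ∈ Finset.range n, Complex.log (1 - (q : ℂ) ^ (k + 1))) := by
  rw [Complex.exp_sum, euP]
  exact Finset.prod_congr rfl fun k _ => (Complex.exp_log (eu_hne hr k)).symm

/-- uniform lower bound on the denominators -/
lemma eu_PC {q : ℝ} (hr : |q| < 1) (n : ℕ) :
    Real.exp (-∑' k, ‖Complex.log (1 - (q : ℂ) ^ (k + 1))‖) ≤ ‖euP q n‖ := by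
  rw [eu_Pexp hr n, Complex.norm_exp]
  apply Real.exp_le_exp.mpr
  have h1 : ‖∑ k ∈ Finset.range n, Complex.log (1 - (q : ℂ) ^ (k + 1))‖
      ≤ ∑' k, ‖Complex.log (1 - (q : ℂ) ^ (k + 1))‖ := by
    calc _ ≤ ∑ k ∈ Finset.range n, ‖Complex.log (1 - (q : ℂ) ^ (k + 1))‖ := norm_sum_le _ _
    _ ≤ _ := Summable.sum_le_tsum _ (fun i _ => norm_nonneg _) (eu_sl hr)
  have h2 := (Complex.abs_re_le_norm (∑ k ∈ Finset.range n, Complex.log (1 - (q : ℂ) ^ (k + 1))))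
  linarith [abs_le.mp (h2.trans h1) |>.1, neg_abs_le (∑ k ∈ Finset.range n, Complex.log (1 - (q : ℂ) ^ (k + 1))).re]

/-- the constant lower bound -/
noncomputable def euC (q : ℝ) : ℝ := Real.exp (-∑' k, ‖Complex.log (1 - (q : ℂ) ^ (k + 1))‖)

lemma eu_C_pos (q : ℝ) : 0 < euC q := Real.exp_pos _

lemma eu_summable {q : ℝ} (hr : |q| < 1) {y : ℂ} (hy : ‖y‖ < 1) :
    Summable fun n => y ^ n / euP q n := by
  apply Summable.of_norm_bounded (g := fun n => (euC q)⁻¹ * ‖y‖ ^ n)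
    ((summable_geometric_of_lt_one (norm_nonneg y) hy).mul_left _)
  intro n
  rw [norm_div, norm_pow]
  rw [div_eq_mul_inv, mul_comm]
  gcongr
  · exact eu_C_pos q
  · exact eu_PC hr n

lemma eu_P_succ (q : ℝ) (n : ℕ) : euP q (n + 1) = euP q n * (1 - (q:ℂ) ^ (n+1)) := by
  rw [euP, euP, Finset.prod_range_succ]

/-- the functional equation -/
lemma eu_feq {q : ℝ} (hr : |q| < 1) {y : ℂ} (hy : ‖y‖ < 1) :
    (∑' n, ((q:ℂ) * y) ^ n / euP q n) = (1 - y) * ∑' n, y ^ n / euP q n := by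
  have hqy : ‖(q:ℂ) * y‖ < 1 := by
    rw [norm_mul, Complex.norm_real, Real.norm_eq_abs]
    calc |q| * ‖y‖ ≤ 1 * ‖y‖ := mul_le_mul_of_nonneg_right hr.le (norm_nonneg y)
    _ = ‖y‖ := one_mul _
    _ < 1 := hy
  have hs1 := eu_summable hr hy
  have hs2 := eu_summable hr hqy
  have key : (∑' n, y ^ n / euP q n) - (∑' n, ((q:ℂ) * y) ^ n / euP q n)
      = y * ∑' n, y ^ n / euP q n := by
    rw [← Summable.tsum_sub hs1 hs2]
    have hg : Summable (fun n => y ^ n / euP q n - ((q:ℂ)*y) ^ n / euP q n) := hs1.sub hs2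
    rw [Summable.tsum_eq_zero_add hg]
    have h0 : y ^ 0 / euP q 0 - ((q:ℂ)*y) ^ 0 / euP q 0 = 0 := by
      simp [euP]
    rw [h0, zero_add]
    have hterm : ∀ n : ℕ, y ^ (n+1) / euP q (n+1) - ((q:ℂ)*y) ^ (n+1) / euP q (n+1)
        = y * (y ^ n / euP q n) := by
      intro n
      rw [eu_P_succ]
      have h1 := eu_hne hr n
      have h2 : euP q n ≠ 0 := by
        rw [euP]
        exact Finset.prod_ne_zero_iff.mpr fun k _ => eu_hne hr k
      field_simp
      ring
    rw [tsum_congr hterm, tsum_mul_left]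
  have := key
  linear_combination -key

/-- iterate the functional equation -/
lemma eu_iter {q : ℝ} (hr : |q| < 1) {x : ℂ} (hx : ‖x‖ < 1) (N : ℕ) :
    (∑' n, ((q:ℂ) ^ N * x) ^ n / euP q n)
      = (∏ k ∈ Finset.range N, (1 - x * (q:ℂ) ^ k)) * ∑' n, x ^ n / euP q n := by
  induction N with
  | zero => simp
  | succ N ih =>
    have hyN : ‖(q:ℂ) ^ N * x‖ < 1 := by
      rw [norm_mul, eu_norm_pow]
      calc |q| ^ N * ‖x‖ ≤ 1 * ‖x‖ := by
            gcongr
            exact pow_le_one₀ (abs_nonneg q) hr.le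
      _ = ‖x‖ := one_mul _
      _ < 1 := hx
    have h1 : ((q:ℂ) ^ (N+1) * x) = (q:ℂ) * ((q:ℂ) ^ N * x) := by ring
    rw [h1, eu_feq hr hyN, ih, Finset.prod_range_succ]
    ring

/-- quantitative bound: `‖f y - 1‖ ≤ C⁻¹ * ‖y‖ * (1-‖y‖)⁻¹` -/
lemma eu_bound {q : ℝ} (hr : |q| < 1) {y : ℂ} (hy : ‖y‖ < 1) :
    ‖(∑' n, y ^ n / euP q n) - 1‖ ≤ (euC q)⁻¹ * ‖y‖ * (1 - ‖y‖)⁻¹ := by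
  have hs := eu_summable hr hy
  rw [Summable.tsum_eq_zero_add hs]
  have h0 : y ^ 0 / euP q 0 = 1 := by simp [euP]
  rw [h0, add_sub_cancel_left]
  apply tsum_of_norm_bounded
    (((hasSum_geometric_of_lt_one (norm_nonneg y) hy).mul_left ((euC q)⁻¹ * ‖y‖)))
  intro n
  rw [norm_div, norm_pow, div_eq_mul_inv]
  calc ‖y‖ ^ (n+1) * ‖euP q (n+1)‖⁻¹ ≤ ‖y‖ ^ (n+1) * (euC q)⁻¹ := by
        gcongr
        · exact eu_C_pos q
        · exact eu_PC hr _
  _ = (euC q)⁻¹ * ‖y‖ * ‖y‖ ^ n := by ring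

lemma eu_lim_one {q : ℝ} (hr : |q| < 1) {x : ℂ} (hx : ‖x‖ < 1) :
    Tendsto (fun N : ℕ => ∑' n, ((q:ℂ) ^ N * x) ^ n / euP q n) atTop (nhds 1) := by
  rw [← tendsto_sub_nhds_zero_iff]
  have hx1 : 0 < 1 - ‖x‖ := by linarith
  apply squeeze_zero_norm (a := fun N : ℕ => ((euC q)⁻¹ * ‖x‖ * (1 - ‖x‖)⁻¹) * |q| ^ N)
  · intro N
    have hyN : ‖(q:ℂ) ^ N * x‖ < 1 := by
      rw [norm_mul, eu_norm_pow]
      calc |q| ^ N * ‖x‖ ≤ 1 * ‖x‖ :=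
            mul_le_mul_of_nonneg_right (pow_le_one₀ (abs_nonneg q) hr.le) (norm_nonneg x)
      _ = ‖x‖ := one_mul _
      _ < 1 := hx
    refine (eu_bound hr hyN).trans ?_
    rw [norm_mul, eu_norm_pow]
    have h1 : |q| ^ N * ‖x‖ ≤ ‖x‖ := by
      calc |q| ^ N * ‖x‖ ≤ 1 * ‖x‖ :=
            mul_le_mul_of_nonneg_right (pow_le_one₀ (abs_nonneg q) hr.le) (norm_nonneg x)
      _ = ‖x‖ := one_mul _
    calc (euC q)⁻¹ * (|q| ^ N * ‖x‖) * (1 - |q| ^ N * ‖x‖)⁻¹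
        ≤ (euC q)⁻¹ * (|q| ^ N * ‖x‖) * (1 - ‖x‖)⁻¹ := by
          have hp : (0:ℝ) < 1 - |q| ^ N * ‖x‖ := by linarith
          gcongr
          · exact mul_nonneg (inv_nonneg.mpr (eu_C_pos q).le)
              (mul_nonneg (pow_nonneg (abs_nonneg q) N) (norm_nonneg x))
    _ = (euC q)⁻¹ * ‖x‖ * (1 - ‖x‖)⁻¹ * |q| ^ N := by ring
  · have h := (tendsto_pow_atTop_nhds_zero_of_lt_one (abs_nonneg q) hr).const_mul
      ((euC q)⁻¹ * ‖x‖ * (1 - ‖x‖)⁻¹)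
    simpa using h

lemma eu_factor_ne {q : ℝ} (hr : |q| < 1) {x : ℂ} (hx : ‖x‖ < 1) (k : ℕ) :
    (1 : ℂ) - x * (q:ℂ) ^ k ≠ 0 := by
  intro h
  have h1 : x * (q:ℂ) ^ k = 1 := by linear_combination -h
  have h2 : ‖x * (q:ℂ) ^ k‖ = 1 := by rw [h1, norm_one]
  rw [norm_mul, eu_norm_pow] at h2
  have h3 : ‖x‖ * |q| ^ k ≤ ‖x‖ * 1 :=
    mul_le_mul_of_nonneg_left (pow_le_one₀ (abs_nonneg q) hr.le) (norm_nonneg x)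
  rw [mul_one] at h3
  linarith

lemma eu_multipliable {q : ℝ} (hr : |q| < 1) {x : ℂ} (hx : ‖x‖ < 1) :
    Multipliable fun k : ℕ => (1 - x * (q:ℂ) ^ k)⁻¹ := by
  apply Complex.multipliable_of_summable_log
  have hx1 : 0 < 1 - ‖x‖ := by linarith
  set M : ℝ := ‖x‖ * (1 - ‖x‖)⁻¹ with hM
  have hM0 : 0 ≤ M := mul_nonneg (norm_nonneg x) (inv_nonneg.mpr hx1.le)
  -- the "w" decomposition
  have hw : ∀ k : ℕ, (1 - x * (q:ℂ) ^ k)⁻¹ = 1 + (x * (q:ℂ)^k) * (1 - x * (q:ℂ) ^ k)⁻¹ := by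
    intro k
    field_simp [eu_factor_ne hr hx k]
    ring
  have hwb : ∀ k : ℕ, ‖(x * (q:ℂ)^k) * (1 - x * (q:ℂ) ^ k)⁻¹‖ ≤ M * |q| ^ k := by
    intro k
    rw [norm_mul, norm_inv, norm_mul, eu_norm_pow]
    have hd : 1 - ‖x‖ ≤ ‖1 - x * (q:ℂ)^k‖ := by
      have := norm_sub_norm_le (1 : ℂ) (x * (q:ℂ)^k)
      rw [norm_one, norm_mul, eu_norm_pow] at this
      have h3 : ‖x‖ * |q| ^ k ≤ ‖x‖ :=
        (mul_le_mul_of_nonneg_left (pow_le_one₀ (abs_nonneg q) hr.le) (norm_nonneg x)).trans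
          (le_of_eq (mul_one _))
      linarith
    calc ‖x‖ * |q| ^ k * ‖1 - x * (q:ℂ)^k‖⁻¹ ≤ ‖x‖ * |q| ^ k * (1 - ‖x‖)⁻¹ := by
          gcongr
    _ = M * |q| ^ k := by rw [hM]; ring
  apply Summable.of_norm_bounded_eventually_nat (g := fun k => (3/2 * M) * |q| ^ k)
    ((summable_geometric_of_lt_one (abs_nonneg q) hr).mul_left _)
  have hev : ∀ᶠ k : ℕ in atTop, M * |q| ^ k ≤ 1/2 := by
    have ht := (tendsto_pow_atTop_nhds_zero_of_lt_one (abs_nonneg q) hr).const_mul M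
    rw [mul_zero] at ht
    exact ht.eventually (eventually_le_nhds (by norm_num))
  filter_upwards [hev] with k hk
  rw [hw k]
  calc ‖Complex.log (1 + (x * (q:ℂ)^k) * (1 - x * (q:ℂ) ^ k)⁻¹)‖
      ≤ 3/2 * ‖(x * (q:ℂ)^k) * (1 - x * (q:ℂ) ^ k)⁻¹‖ :=
        Complex.norm_log_one_add_half_le_self ((hwb k).trans hk)
  _ ≤ 3/2 * (M * |q| ^ k) := by gcongr; exact hwb k
  _ = 3/2 * M * |q| ^ k := by ring

/-- Euler's identity: for `-1 < q < 1` real and `‖x‖ < 1` complex,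
`∑_{n≥0} x^n / (q;q)_n = ∏_{k≥0} (1 - x q^k)⁻¹`. -/
theorem euler_identity (q : ℝ) (x : ℂ) (hq1 : -1 < q) (hq2 : q < 1) (hx : ‖x‖ < 1) :
    ∑' n : ℕ, x ^ n / ∏ k ∈ Finset.range n, (1 - (q : ℂ) ^ (k + 1)) =
      ∏' k : ℕ, (1 - x * (q : ℂ) ^ k)⁻¹ := by
  have hr : |q| < 1 := abs_lt.mpr ⟨hq1, hq2⟩
  have hmult := eu_multipliable hr hx
  have hprod : Tendsto (fun N : ℕ => ∏ k ∈ Finset.range N, (1 - x * (q:ℂ) ^ k)⁻¹) atTop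
      (nhds (∏' k : ℕ, (1 - x * (q:ℂ) ^ k)⁻¹)) := hmult.hasProd.tendsto_prod_nat
  have hone := eu_lim_one hr hx
  have heq : ∀ N : ℕ, (∏ k ∈ Finset.range N, (1 - x * (q:ℂ) ^ k)⁻¹)
      * (∑' n, ((q:ℂ) ^ N * x) ^ n / euP q n) = ∑' n, x ^ n / euP q n := by
    intro N
    rw [eu_iter hr hx N, Finset.prod_inv_distrib, ← mul_assoc,
      inv_mul_cancel₀ (Finset.prod_ne_zero_iff.mpr fun k _ => eu_factor_ne hr hx k), one_mul]
  have hT : Tendsto (fun N : ℕ => (∏ k ∈ Finset.range N, (1 - x * (q:ℂ) ^ k)⁻¹)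
      * (∑' n, ((q:ℂ) ^ N * x) ^ n / euP q n)) atTop
      (nhds ((∏' k : ℕ, (1 - x * (q:ℂ) ^ k)⁻¹) * 1)) := hprod.mul hone
  rw [funext heq] at hT
  have := tendsto_nhds_unique hT tendsto_const_nhds
  rw [mul_one] at this
  rw [show (∑' n : ℕ, x ^ n / ∏ k ∈ Finset.range n, (1 - (q : ℂ) ^ (k + 1)))
    = ∑' n, x ^ n / euP q n from rfl]
  exact this.symm
end

section
/- For real q > 1 and real u with u^2 < q, the generating function identity holds: ∑_{n≥0} u^n q^{n(n-1)/2} ∑_{r=0}^{⌊n/2⌋} 1/(q^{r(2n-3r)} |GL(r,q)| |GL(n-2r,q)|) = ∏_{i≥1}(1 + u/q^i) / ∏_{i≥1}(1 - u^2/q^i). -/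
open Finset Filter Topology

namespace GLeven

noncomputable def P (t : ℝ) (m : ℕ) : ℝ := ∏ k ∈ Finset.range m, (1 - t ^ (k + 1))

noncomputable def a (t x : ℝ) (m : ℕ) : ℝ := x ^ m * t ^ (m * (m + 1) / 2) / P t m

noncomputable def b (t x : ℝ) (r : ℕ) : ℝ := x ^ r / P t r

noncomputable def A (t x : ℝ) : ℝ := ∑' m : ℕ, a t x m

noncomputable def B (t x : ℝ) : ℝ := ∑' r : ℕ, b t x r

variable {t x y : ℝ}

lemma P_zero : P t 0 = 1 := by simp [P]

lemma A_def : A t x = ∑' m : ℕ, a t x m := rfl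

lemma B_def : B t x = ∑' r : ℕ, b t x r := rfl

lemma P_succ (m : ℕ) : P t (m + 1) = P t m * (1 - t ^ (m + 1)) :=
  Finset.prod_range_succ _ _

lemma one_sub_pow_pos (h0 : 0 ≤ t) (h1 : t < 1) (k : ℕ) : 0 < 1 - t ^ (k + 1) := by
  have : t ^ (k + 1) < 1 := pow_lt_one₀ h0 h1 (Nat.succ_ne_zero k)
  linarith

lemma P_pos (h0 : 0 ≤ t) (h1 : t < 1) (m : ℕ) : 0 < P t m :=
  Finset.prod_pos fun k _ => one_sub_pow_pos h0 h1 k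

lemma pow_succ_le (h0 : 0 ≤ t) (h1 : t < 1) (k : ℕ) : t ^ (k + 1) ≤ t := by
  calc t ^ (k + 1) ≤ t ^ 1 := pow_le_pow_of_le_one h0 h1.le (by omega)
  _ = t := pow_one t

lemma tri_succ (m : ℕ) : (m + 1) * (m + 2) / 2 = m * (m + 1) / 2 + (m + 1) := by
  obtain ⟨k, hk⟩ := Nat.even_mul_succ_self m
  have h2 : (m + 1) * (m + 2) = m * (m + 1) + 2 * (m + 1) := by ring
  omega

lemma a_zero : a t x 0 = 1 := by simp [a, P_zero]

lemma b_zero : b t x 0 = 1 := by simp [b, P_zero]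

lemma a_succ (h0 : 0 ≤ t) (h1 : t < 1) (m : ℕ) :
    a t x (m + 1) = x * t ^ (m + 1) / (1 - t ^ (m + 1)) * a t x m := by
  have h := (one_sub_pow_pos h0 h1 m).ne'
  have hP := (P_pos h0 h1 m).ne'
  rw [a, a, tri_succ, P_succ, pow_add, pow_succ]
  field_simp
  ring

lemma b_succ (h0 : 0 ≤ t) (h1 : t < 1) (r : ℕ) :
    b t x (r + 1) = x / (1 - t ^ (r + 1)) * b t x r := by
  have h := (one_sub_pow_pos h0 h1 r).ne'
  have hP := (P_pos h0 h1 r).ne'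
  rw [b, b, P_succ, pow_succ]
  field_simp

/-- ratio test helper with super-geometric ratio -/
lemma summable_of_ratio_pow (h0 : 0 < t) (h1 : t < 1) (K : ℝ) (g : ℕ → ℝ)
    (hg : ∀ m, |g (m + 1)| ≤ K * t ^ (m + 1) * |g m|) : Summable g := by
  apply summable_of_ratio_norm_eventually_le (r := 1 / 2) (by norm_num)
  have ht : Tendsto (fun m : ℕ => K * t ^ (m + 1)) atTop (𝓝 0) := by
    have := (tendsto_pow_atTop_nhds_zero_of_lt_one h0.le h1).const_mul (K * t)
    simp only [mul_zero] at this
    refine this.congr fun m => by ring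
  filter_upwards [ht.eventually (eventually_le_nhds (by norm_num : (0:ℝ) < 1/2))] with m hm
  have habs : 0 ≤ |g m| := abs_nonneg _
  calc ‖g (m + 1)‖ = |g (m + 1)| := Real.norm_eq_abs _
    _ ≤ K * t ^ (m + 1) * |g m| := hg m
    _ ≤ 1 / 2 * |g m| := mul_le_mul_of_nonneg_right hm habs
    _ = 1 / 2 * ‖g m‖ := by rw [Real.norm_eq_abs]

/-- ratio test helper with ratio tending to `|x| < 1` -/
lemma summable_of_ratio_b (h0 : 0 < t) (h1 : t < 1) (hx : |x| < 1) (g : ℕ → ℝ)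
    (hg : ∀ r, |g (r + 1)| ≤ |x| / (1 - t ^ (r + 1)) * |g r|) : Summable g := by
  apply summable_of_ratio_norm_eventually_le (r := (1 + |x|) / 2)
    (by linarith)
  have htend : Tendsto (fun r : ℕ => |x| / (1 - t ^ (r + 1))) atTop (𝓝 |x|) := by
    have h2 : Tendsto (fun r : ℕ => 1 - t ^ (r + 1)) atTop (𝓝 1) := by
      have h3 : Tendsto (fun r : ℕ => t ^ (r + 1)) atTop (𝓝 0) := by
        have := (tendsto_pow_atTop_nhds_zero_of_lt_one h0.le h1).const_mul t
        simp only [mul_zero] at this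
        refine this.congr fun m => by rw [← pow_succ']
      have := h3.const_sub 1
      simpa using this
    have := (tendsto_const_nhds (x := |x|) (f := atTop (α := ℕ))).div h2 one_ne_zero
    rw [div_one] at this; exact this
  filter_upwards [htend.eventually (eventually_le_nhds (by linarith : |x| < (1 + |x|) / 2))]
    with r hr
  calc ‖g (r + 1)‖ = |g (r + 1)| := Real.norm_eq_abs _
    _ ≤ |x| / (1 - t ^ (r + 1)) * |g r| := hg r
    _ ≤ (1 + |x|) / 2 * |g r| := mul_le_mul_of_nonneg_right hr (abs_nonneg _)
    _ = (1 + |x|) / 2 * ‖g r‖ := by rw [Real.norm_eq_abs]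

lemma abs_a_succ_le (h0 : 0 < t) (h1 : t < 1) (m : ℕ) :
    |a t x (m + 1)| ≤ |x| / (1 - t) * t ^ (m + 1) * |a t x m| := by
  have h1m := one_sub_pow_pos h0.le h1 m
  have h1t : (0:ℝ) < 1 - t := by linarith
  rw [a_succ h0.le h1, abs_mul, abs_div, abs_mul]
  have hpow : 0 ≤ t ^ (m + 1) := pow_nonneg h0.le _
  rw [abs_of_pos h1m, abs_of_nonneg hpow]
  apply mul_le_mul_of_nonneg_right _ (abs_nonneg _)
  rw [div_le_iff₀ h1m]
  have hle : 1 - t ≤ 1 - t ^ (m + 1) := by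
    have := pow_succ_le h0.le h1 m; linarith
  calc |x| * t ^ (m + 1) = |x| / (1 - t) * t ^ (m + 1) * (1 - t) := by
        field_simp
    _ ≤ |x| / (1 - t) * t ^ (m + 1) * (1 - t ^ (m + 1)) := by
        apply mul_le_mul_of_nonneg_left hle
        positivity

lemma summable_a (h0 : 0 < t) (h1 : t < 1) (x : ℝ) : Summable (a t x) :=
  summable_of_ratio_pow h0 h1 (|x| / (1 - t)) _ (abs_a_succ_le h0 h1)

lemma summable_abs_a (h0 : 0 < t) (h1 : t < 1) (x : ℝ) :
    Summable (fun m => |a t x m|) := by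
  apply summable_of_ratio_pow h0 h1 (|x| / (1 - t))
  intro m
  rw [abs_abs, abs_abs]
  exact abs_a_succ_le h0 h1 m

lemma abs_b_succ_le (h0 : 0 < t) (h1 : t < 1) (r : ℕ) :
    |b t x (r + 1)| ≤ |x| / (1 - t ^ (r + 1)) * |b t x r| := by
  have h1m := one_sub_pow_pos h0.le h1 r
  rw [b_succ h0.le h1, abs_mul, abs_div, abs_of_pos h1m]

lemma summable_b (h0 : 0 < t) (h1 : t < 1) (hx : |x| < 1) : Summable (b t x) :=
  summable_of_ratio_b h0 h1 hx _ (abs_b_succ_le h0 h1)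

lemma summable_abs_b (h0 : 0 < t) (h1 : t < 1) (hx : |x| < 1) :
    Summable (fun r => |b t x r|) := by
  apply summable_of_ratio_b h0 h1 hx
  intro r
  rw [abs_abs, abs_abs]
  exact abs_b_succ_le h0 h1 r

lemma A_fe (h0 : 0 < t) (h1 : t < 1) (x : ℝ) :
    A t x = (1 + x * t) * A t (x * t) := by
  have hsx := summable_a h0 h1 x
  have hsxt := summable_a h0 h1 (x * t)
  have hterm : ∀ m : ℕ, a t x (m + 1) = a t (x * t) (m + 1) + x * t * a t (x * t) m := by
    intro m
    have h := (one_sub_pow_pos h0.le h1 m).ne'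
    have hP := (P_pos h0.le h1 m).ne'
    rw [a_succ h0.le h1 m, a_succ h0.le h1 m]
    simp only [a, mul_pow]
    field_simp
    ring
  have hshift : Summable (fun m => a t (x * t) (m + 1)) :=
    (summable_nat_add_iff 1).2 hsxt
  have hmul : Summable (fun m => x * t * a t (x * t) m) := hsxt.mul_left _
  have e1 : A t x = 1 + ∑' m, a t x (m + 1) := by
    rw [A, Summable.tsum_eq_zero_add hsx, a_zero]
  have e2 : A t (x * t) = 1 + ∑' m, a t (x * t) (m + 1) := by
    rw [A, Summable.tsum_eq_zero_add hsxt, a_zero]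
  have h5 : (∑' m, a t (x * t) (m + 1)) = A t (x * t) - 1 := by rw [e2]; ring
  rw [e1, tsum_congr hterm, Summable.tsum_add hshift hmul, h5, tsum_mul_left, ← A_def]
  ring

lemma B_fe (h0 : 0 < t) (h1 : t < 1) (hx : |x| < 1) :
    (1 - x) * B t x = B t (x * t) := by
  have hxt : |x * t| < 1 := by
    rw [abs_mul, abs_of_pos h0]
    calc |x| * t ≤ 1 * t := mul_le_mul_of_nonneg_right (le_of_lt hx) h0.le
    _ = t := one_mul t
    _ < 1 := h1
  have hsx := summable_b h0 h1 hx
  have hsxt := summable_b h0 h1 hxt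
  have hterm : ∀ r : ℕ, b t x (r + 1) = b t (x * t) (r + 1) + x * b t x r := by
    intro r
    have h := (one_sub_pow_pos h0.le h1 r).ne'
    have hP := (P_pos h0.le h1 r).ne'
    rw [b_succ h0.le h1 r, b_succ h0.le h1 r]
    simp only [b, mul_pow]
    field_simp
    ring
  have hshift : Summable (fun r => b t (x * t) (r + 1)) :=
    (summable_nat_add_iff 1).2 hsxt
  have hmul : Summable (fun r => x * b t x r) := hsx.mul_left _
  have e1 : B t x = 1 + ∑' r, b t x (r + 1) := by
    rw [B, Summable.tsum_eq_zero_add hsx, b_zero]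
  have e2 : B t (x * t) = 1 + ∑' r, b t (x * t) (r + 1) := by
    rw [B, Summable.tsum_eq_zero_add hsxt, b_zero]
  have h5 : (∑' r, b t (x * t) (r + 1)) = B t (x * t) - 1 := by rw [e2]; ring
  have hx5 : (∑' r, b t x (r + 1)) = (B t (x * t) - 1) + x * B t x := by
    rw [tsum_congr hterm, Summable.tsum_add hshift hmul, h5, tsum_mul_left, ← B_def]
  have e3 : B t x = 1 + ((B t (x * t) - 1) + x * B t x) := e1.trans (by rw [hx5])
  linarith [e3]

lemma A_iter (h0 : 0 < t) (h1 : t < 1) (x : ℝ) (N : ℕ) :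
    A t x = (∏ i ∈ Finset.range N, (1 + x * t ^ (i + 1))) * A t (x * t ^ N) := by
  induction N with
  | zero => simp
  | succ N ih =>
    rw [ih, A_fe h0 h1 (x * t ^ N), Finset.prod_range_succ]
    rw [show x * t ^ N * t = x * t ^ (N + 1) by rw [pow_succ]; ring]
    ring

lemma B_iter (h0 : 0 < t) (h1 : t < 1) (hx : |x| < 1) (N : ℕ) :
    B t x * (∏ i ∈ Finset.range N, (1 - x * t ^ i)) = B t (x * t ^ N) := by
  induction N with
  | zero => simp
  | succ N ih =>
    have hxN : |x * t ^ N| < 1 := by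
      rw [abs_mul, abs_of_nonneg (pow_nonneg h0.le N)]
      calc |x| * t ^ N ≤ |x| * 1 :=
            mul_le_mul_of_nonneg_left (pow_le_one₀ h0.le h1.le) (abs_nonneg _)
        _ = |x| := mul_one _
        _ < 1 := hx
    rw [Finset.prod_range_succ, ← mul_assoc, ih]
    have := B_fe h0 h1 hxN
    rw [show x * t ^ N * t = x * t ^ (N + 1) by rw [pow_succ]; ring] at this
    rw [← this]
    ring

end GLeven

section Limits

namespace GLeven

variable {t x : ℝ}

set_option maxHeartbeats 1000000 in
lemma tendsto_A_one (h0 : 0 < t) (h1 : t < 1) (x : ℝ) :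
    Tendsto (fun N : ℕ => A t (x * t ^ N)) atTop (𝓝 1) := by
  -- bound helper sequence
  set g : ℕ → ℝ := fun m => |x| ^ m * t ^ ((m + 1) * (m + 2) / 2) / P t (m + 1) with hg
  have hgnonneg : ∀ m, 0 ≤ g m := by
    intro m
    apply div_nonneg (mul_nonneg (pow_nonneg (abs_nonneg _) _) (pow_nonneg h0.le _))
      (P_pos h0.le h1 _).le
  have hgsum : Summable g := by
    apply summable_of_ratio_pow h0 h1 (|x| * t / (1 - t))
    intro m
    have h1m := one_sub_pow_pos h0.le h1 (m + 1)
    have h1t : (0:ℝ) < 1 - t := by linarith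
    have hgm : g (m + 1) = |x| * t ^ (m + 2) / (1 - t ^ (m + 2)) * g m := by
      rw [hg]
      simp only
      rw [tri_succ (m + 1), P_succ (m + 1), pow_add, pow_succ]
      have := (P_pos h0.le h1 (m + 1)).ne'
      have := h1m.ne'
      field_simp
      ring
    rw [abs_of_nonneg (hgnonneg (m + 1)), abs_of_nonneg (hgnonneg m), hgm]
    have hle : 1 - t ≤ 1 - t ^ (m + 2) := by
      have := pow_succ_le h0.le h1 (m + 1); linarith
    have key : |x| * t ^ (m + 2) / (1 - t ^ (m + 2)) ≤ |x| * t / (1 - t) * t ^ (m + 1) := by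
      rw [div_le_iff₀ h1m]
      have : |x| * t / (1 - t) * t ^ (m + 1) * (1 - t) = |x| * t ^ (m + 2) := by
        field_simp; ring
      calc |x| * t ^ (m + 2) = |x| * t / (1 - t) * t ^ (m + 1) * (1 - t) := this.symm
        _ ≤ |x| * t / (1 - t) * t ^ (m + 1) * (1 - t ^ (m + 2)) := by
            apply mul_le_mul_of_nonneg_left hle
            positivity
    exact mul_le_mul_of_nonneg_right key (hgnonneg m)
  set S : ℝ := ∑' m, g m with hS
  have hSnonneg : 0 ≤ S := tsum_nonneg hgnonneg
  -- the bound |A t y - 1| ≤ |y| * S for |y| ≤ |x|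
  have hbound : ∀ y : ℝ, |y| ≤ |x| → |A t y - 1| ≤ |y| * S := by
    intro y hy
    have hsy := summable_a h0 h1 y
    have hshift : Summable (fun m => a t y (m + 1)) := (summable_nat_add_iff 1).2 hsy
    have habs : Summable (fun m => |a t y (m + 1)|) :=
      (summable_nat_add_iff 1).2 (summable_abs_a h0 h1 y)
    have e1 : A t y - 1 = ∑' m, a t y (m + 1) := by
      rw [A, Summable.tsum_eq_zero_add hsy, a_zero]; ring
    rw [e1]
    have hterm : ∀ m, |a t y (m + 1)| ≤ |y| * g m := by
      intro m
      rw [a, abs_div, abs_mul, abs_pow, abs_pow,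
        abs_of_pos h0, abs_of_pos (P_pos h0.le h1 _)]
      rw [hg]
      simp only [show m + 1 + 1 = m + 2 from rfl]
      rw [div_le_iff₀ (P_pos h0.le h1 (m + 1))]
      have hyx : |y| ^ m ≤ |x| ^ m := pow_le_pow_left₀ (abs_nonneg _) hy m
      calc |y| ^ (m + 1) * t ^ ((m + 1) * (m + 2) / 2)
          = |y| * |y| ^ m * t ^ ((m + 1) * (m + 2) / 2) := by
            rw [pow_succ]; ring
        _ ≤ |y| * |x| ^ m * t ^ ((m + 1) * (m + 2) / 2) := by
            apply mul_le_mul_of_nonneg_right _ (pow_nonneg h0.le _)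
            exact mul_le_mul_of_nonneg_left hyx (abs_nonneg _)
        _ = |y| * (|x| ^ m * t ^ ((m + 1) * (m + 2) / 2) / P t (m + 1)) * P t (m + 1) := by
            field_simp [(P_pos h0.le h1 (m+1)).ne']
    calc |∑' m, a t y (m + 1)| ≤ ∑' m, |a t y (m + 1)| := by
          simpa [Real.norm_eq_abs] using norm_tsum_le_tsum_norm
            (by simpa [Real.norm_eq_abs] using habs : Summable fun m => ‖a t y (m+1)‖)
      _ ≤ ∑' m, |y| * g m := Summable.tsum_le_tsum hterm habs (hgsum.mul_left _)
      _ = |y| * S := tsum_mul_left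
  -- now the squeeze
  have hyN : ∀ N : ℕ, |x * t ^ N| ≤ |x| := by
    intro N
    rw [abs_mul, abs_of_nonneg (pow_nonneg h0.le N)]
    calc |x| * t ^ N ≤ |x| * 1 :=
          mul_le_mul_of_nonneg_left (pow_le_one₀ h0.le h1.le) (abs_nonneg _)
      _ = |x| := mul_one _
  have hsq : Tendsto (fun N : ℕ => A t (x * t ^ N) - 1) atTop (𝓝 0) := by
    rw [tendsto_zero_iff_abs_tendsto_zero]
    apply squeeze_zero (fun N => abs_nonneg _) (fun N => ?_)
      (g := fun N : ℕ => |x| * t ^ N * S)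
    · have : Tendsto (fun N : ℕ => t ^ N) atTop (𝓝 0) :=
        tendsto_pow_atTop_nhds_zero_of_lt_one h0.le h1
      have h2 := (this.const_mul |x|).mul_const S
      simpa using h2.congr fun N => by ring
    · calc |A t (x * t ^ N) - 1| ≤ |x * t ^ N| * S := hbound _ (hyN N)
        _ ≤ |x| * t ^ N * S := by
            rw [abs_mul, abs_of_nonneg (pow_nonneg h0.le N)]
  have := hsq.add_const 1
  simpa using this

set_option maxHeartbeats 1000000 in
lemma tendsto_B_one (h0 : 0 < t) (h1 : t < 1) (hx : |x| < 1) :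
    Tendsto (fun N : ℕ => B t (x * t ^ N)) atTop (𝓝 1) := by
  set g : ℕ → ℝ := fun r => |x| ^ r / P t (r + 1) with hg
  have hgnonneg : ∀ r, 0 ≤ g r := fun r =>
    div_nonneg (pow_nonneg (abs_nonneg _) _) (P_pos h0.le h1 _).le
  have hgsum : Summable g := by
    apply summable_of_ratio_b h0 h1 hx
    intro r
    have h1m := one_sub_pow_pos h0.le h1 (r + 1)
    have h1r := one_sub_pow_pos h0.le h1 r
    have hgm : g (r + 1) = |x| / (1 - t ^ (r + 2)) * g r := by
      rw [hg]
      simp only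
      rw [P_succ (r + 1), pow_succ]
      have := (P_pos h0.le h1 (r + 1)).ne'
      have := (one_sub_pow_pos h0.le h1 (r + 1)).ne'
      field_simp
    rw [abs_of_nonneg (hgnonneg (r + 1)), abs_of_nonneg (hgnonneg r), hgm]
    apply mul_le_mul_of_nonneg_right _ (hgnonneg r)
    apply div_le_div_of_nonneg_left (abs_nonneg _) h1r
    have h2 : t ^ (r + 2) ≤ t ^ (r + 1) :=
      pow_le_pow_of_le_one h0.le h1.le (by omega)
    linarith
  set S : ℝ := ∑' r, g r with hS
  have hbound : ∀ y : ℝ, |y| ≤ |x| → |B t y - 1| ≤ |y| * S := by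
    intro y hy
    have hyy : |y| < 1 := lt_of_le_of_lt hy hx
    have hsy := summable_b h0 h1 hyy
    have hshift : Summable (fun r => b t y (r + 1)) := (summable_nat_add_iff 1).2 hsy
    have habs : Summable (fun r => |b t y (r + 1)|) :=
      (summable_nat_add_iff 1).2 (summable_abs_b h0 h1 hyy)
    have e1 : B t y - 1 = ∑' r, b t y (r + 1) := by
      rw [B, Summable.tsum_eq_zero_add hsy, b_zero]; ring
    rw [e1]
    have hterm : ∀ r, |b t y (r + 1)| ≤ |y| * g r := by
      intro r
      rw [b, abs_div, abs_pow, abs_of_pos (P_pos h0.le h1 _)]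
      rw [hg]
      simp only
      rw [div_le_iff₀ (P_pos h0.le h1 _)]
      have hyx : |y| ^ r ≤ |x| ^ r := pow_le_pow_left₀ (abs_nonneg _) hy r
      calc |y| ^ (r + 1) = |y| * |y| ^ r := by rw [pow_succ]; ring
        _ ≤ |y| * |x| ^ r := mul_le_mul_of_nonneg_left hyx (abs_nonneg _)
        _ = |y| * (|x| ^ r / P t (r + 1)) * P t (r + 1) := by
            field_simp [(P_pos h0.le h1 (r+1)).ne']
    calc |∑' r, b t y (r + 1)| ≤ ∑' r, |b t y (r + 1)| := by
          simpa [Real.norm_eq_abs] using norm_tsum_le_tsum_norm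
            (by simpa [Real.norm_eq_abs] using habs : Summable fun r => ‖b t y (r+1)‖)
      _ ≤ ∑' r, |y| * g r := Summable.tsum_le_tsum hterm habs (hgsum.mul_left _)
      _ = |y| * S := tsum_mul_left
  have hyN : ∀ N : ℕ, |x * t ^ N| ≤ |x| := by
    intro N
    rw [abs_mul, abs_of_nonneg (pow_nonneg h0.le N)]
    calc |x| * t ^ N ≤ |x| * 1 :=
          mul_le_mul_of_nonneg_left (pow_le_one₀ h0.le h1.le) (abs_nonneg _)
      _ = |x| := mul_one _
  have hsq : Tendsto (fun N : ℕ => B t (x * t ^ N) - 1) atTop (𝓝 0) := by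
    rw [tendsto_zero_iff_abs_tendsto_zero]
    apply squeeze_zero (fun N => abs_nonneg _) (fun N => ?_)
      (g := fun N : ℕ => |x| * t ^ N * S)
    · have : Tendsto (fun N : ℕ => t ^ N) atTop (𝓝 0) :=
        tendsto_pow_atTop_nhds_zero_of_lt_one h0.le h1
      have h2 := (this.const_mul |x|).mul_const S
      simpa using h2.congr fun N => by ring
    · calc |B t (x * t ^ N) - 1| ≤ |x * t ^ N| * S := hbound _ (hyN N)
        _ ≤ |x| * t ^ N * S := by
            rw [abs_mul, abs_of_nonneg (pow_nonneg h0.le N)]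
  have := hsq.add_const 1
  simpa using this

set_option maxHeartbeats 1000000 in
/-- multipliability of `∏ (1 + z t^i)` -/
lemma multipliable_one_add (h0 : 0 < t) (h1 : t < 1) (hz : |x| < 1) :
    Multipliable (fun i : ℕ => 1 + x * t ^ i) := by
  have hpos : ∀ i : ℕ, 0 < 1 + x * t ^ i := by
    intro i
    have h2 : |x * t ^ i| ≤ |x| := by
      rw [abs_mul, abs_of_nonneg (pow_nonneg h0.le i)]
      calc |x| * t ^ i ≤ |x| * 1 :=
            mul_le_mul_of_nonneg_left (pow_le_one₀ h0.le h1.le) (abs_nonneg _)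
        _ = |x| := mul_one _
    have := abs_lt.1 (lt_of_le_of_lt h2 hz)
    linarith [this.1]
  have hlog : Summable (fun i : ℕ => Real.log (1 + x * t ^ i)) := by
    apply Summable.of_norm_bounded (g := fun i => |x| / (1 - |x|) * t ^ i)
    · exact (summable_geometric_of_lt_one h0.le h1).mul_left _
    · intro i
      have h2 : |x * t ^ i| ≤ |x| := by
        rw [abs_mul, abs_of_nonneg (pow_nonneg h0.le i)]
        calc |x| * t ^ i ≤ |x| * 1 :=
              mul_le_mul_of_nonneg_left (pow_le_one₀ h0.le h1.le) (abs_nonneg _)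
          _ = |x| := mul_one _
      set w := x * t ^ i with hw
      have hw1 : |w| < 1 := lt_of_le_of_lt h2 hz
      have hwpos : 0 < 1 + w := hpos i
      have h1x : (0:ℝ) < 1 - |x| := by linarith
      have hub : Real.log (1 + w) ≤ |w| / (1 - |x|) := by
        calc Real.log (1 + w) ≤ 1 + w - 1 := Real.log_le_sub_one_of_pos hwpos
          _ = w := by ring
          _ ≤ |w| := le_abs_self w
          _ ≤ |w| / (1 - |x|) := by
              rw [le_div_iff₀ h1x]
              nlinarith [abs_nonneg w]
      have hlb : -(|w| / (1 - |x|)) ≤ Real.log (1 + w) := by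
        have := Real.one_sub_inv_le_log_of_pos hwpos
        have hinv : (1 + w)⁻¹ ≤ (1 - |x|)⁻¹ := by
          apply inv_anti₀ h1x
          have := abs_le.1 (le_of_lt hw1)
          have := abs_le.1 h2
          linarith [neg_abs_le w]
        have h3 : 1 - (1 + w)⁻¹ ≥ 1 - (1 - |x|)⁻¹ := by linarith
        have h4 : -(|w| / (1 - |x|)) ≤ 1 - (1 + w)⁻¹ := by
          have he : 1 - (1 + w)⁻¹ = w / (1 + w) := by field_simp; ring
          rw [he]
          rcases le_or_gt 0 w with hw0 | hw0
          · have ha : 0 ≤ w / (1 + w) := div_nonneg hw0 hwpos.le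
            have hb : 0 ≤ |w| / (1 - |x|) := div_nonneg (abs_nonneg _) h1x.le
            linarith
          · have habsw : |w| = -w := abs_of_neg hw0
            have hwx : 0 ≤ w + |x| := by
              have : -w ≤ |x| := by rw [← habsw]; exact h2
              linarith
            have h5 : w / (1 - |x|) ≤ w / (1 + w) := by
              rw [div_le_div_iff₀ h1x hwpos]
              nlinarith [mul_nonneg (neg_nonneg.2 hw0.le) hwx]
            calc -(|w| / (1 - |x|)) = w / (1 - |x|) := by rw [habsw]; ring
              _ ≤ w / (1 + w) := h5
        linarith
      rw [Real.norm_eq_abs, abs_le]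
      constructor
      · calc -(|x| / (1 - |x|) * t ^ i) = -(|x| * t ^ i / (1 - |x|)) := by ring
          _ = -(|w| / (1 - |x|)) := by
              rw [hw, abs_mul, abs_of_nonneg (pow_nonneg h0.le i)]
          _ ≤ Real.log (1 + w) := hlb
      · calc Real.log (1 + w) ≤ |w| / (1 - |x|) := hub
          _ = |x| * t ^ i / (1 - |x|) := by
              rw [hw, abs_mul, abs_of_nonneg (pow_nonneg h0.le i)]
          _ = |x| / (1 - |x|) * t ^ i := by ring
  exact Real.multipliable_of_summable_log hpos hlog

lemma A_eq_tprod (h0 : 0 < t) (h1 : t < 1) (hxt : |x * t| < 1) :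
    A t x = ∏' i : ℕ, (1 + x * t ^ (i + 1)) := by
  have hm : Multipliable (fun i : ℕ => 1 + (x * t) * t ^ i) :=
    multipliable_one_add h0 h1 hxt
  have hcongr : (fun i : ℕ => 1 + (x * t) * t ^ i) = fun i : ℕ => 1 + x * t ^ (i + 1) := by
    funext i; rw [pow_succ]; ring
  rw [hcongr] at hm
  have h1' : Tendsto (fun N => ∏ i ∈ Finset.range N, (1 + x * t ^ (i + 1))) atTop
      (𝓝 (∏' i : ℕ, (1 + x * t ^ (i + 1)))) := hm.hasProd.tendsto_prod_nat
  have h2 : Tendsto (fun N : ℕ => A t (x * t ^ N)) atTop (𝓝 1) := tendsto_A_one h0 h1 x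
  have h3 := h1'.mul h2
  rw [mul_one] at h3
  have h4 : (fun N : ℕ => (∏ i ∈ Finset.range N, (1 + x * t ^ (i + 1))) * A t (x * t ^ N))
      = fun _ => A t x := by
    funext N; exact (A_iter h0 h1 x N).symm
  rw [h4] at h3
  exact tendsto_nhds_unique tendsto_const_nhds h3

lemma B_mul_tprod (h0 : 0 < t) (h1 : t < 1) (hx : |x| < 1) :
    B t x * (∏' i : ℕ, (1 - x * t ^ i)) = 1 := by
  have hm : Multipliable (fun i : ℕ => 1 + (-x) * t ^ i) :=
    multipliable_one_add h0 h1 (by rwa [abs_neg])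
  have hcongr : (fun i : ℕ => 1 + (-x) * t ^ i) = fun i : ℕ => 1 - x * t ^ i := by
    funext i; ring
  rw [hcongr] at hm
  have h1' : Tendsto (fun N => ∏ i ∈ Finset.range N, (1 - x * t ^ i)) atTop
      (𝓝 (∏' i : ℕ, (1 - x * t ^ i))) := hm.hasProd.tendsto_prod_nat
  have h2 : Tendsto (fun N : ℕ => B t (x * t ^ N)) atTop (𝓝 1) := tendsto_B_one h0 h1 hx
  have h3 := h1'.const_mul (B t x)
  have h4 : (fun N : ℕ => B t x * ∏ i ∈ Finset.range N, (1 - x * t ^ i))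
      = fun N : ℕ => B t (x * t ^ N) := by
    funext N; exact B_iter h0 h1 hx N
  rw [h4] at h3
  exact tendsto_nhds_unique h3 h2

end GLeven

end Limits

namespace GLeven

variable {t x y : ℝ}

set_option maxHeartbeats 1000000 in
/-- Cauchy-type product with step 2 -/
lemma sum_eq_mul (h0 : 0 < t) (h1 : t < 1) (x : ℝ) (hy : |y| < 1) :
    ∑' n : ℕ, ∑ r ∈ Finset.range (n / 2 + 1), a t x (n - 2 * r) * b t y r
      = A t x * B t y := by
  have hax := summable_abs_a h0 h1 x
  have hax' : Summable fun m => ‖a t x m‖ := by simpa [Real.norm_eq_abs] using hax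
  have hab := summable_abs_b h0 h1 hy
  have hab' : Summable fun r => ‖b t y r‖ := by simpa [Real.norm_eq_abs] using hab
  have hprod : A t x * B t y = ∑' p : ℕ × ℕ, a t x p.1 * b t y p.2 :=
    tsum_mul_tsum_of_summable_norm hax' hab'
  classical
  set F : ℕ × ℕ → ℝ := fun p => if 2 * p.2 ≤ p.1 then a t x (p.1 - 2 * p.2) * b t y p.2 else 0
    with hF
  set e : ℕ × ℕ → ℕ × ℕ := fun p => (p.1 + 2 * p.2, p.2) with he
  have hinj : Function.Injective e := by
    intro p q h
    rw [he] at h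
    simp only [Prod.mk.injEq] at h
    obtain ⟨h1', h2'⟩ := h
    exact Prod.ext (by omega) h2'
  have hcomp : ∀ p : ℕ × ℕ, F (e p) = a t x p.1 * b t y p.2 := by
    intro p
    rw [hF, he]
    simp only
    rw [if_pos (by omega)]
    congr 2
    omega
  have hsupp : Function.support F ⊆ Set.range e := by
    intro p hp
    by_cases h : 2 * p.2 ≤ p.1
    · exact ⟨(p.1 - 2 * p.2, p.2), by rw [he]; exact Prod.ext (by simp; omega) rfl⟩
    · exfalso; apply hp; rw [hF]; simp only; rw [if_neg h]
  have hsupp' : ∀ p ∉ Set.range e, F p = 0 := by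
    intro p hp
    by_contra hne
    exact hp (hsupp hne)
  have hFe : F ∘ e = fun p : ℕ × ℕ => a t x p.1 * b t y p.2 := funext hcomp
  have hFsum : Summable F := by
    rw [← hinj.summable_iff hsupp']
    rw [hFe]
    exact summable_mul_of_summable_norm hax' hab'
  have h2 : ∑' p : ℕ × ℕ, a t x p.1 * b t y p.2 = ∑' p, F p := by
    have heq := hinj.tsum_eq (f := F) hsupp
    rw [← heq]
    exact tsum_congr fun p => (hcomp p).symm
  have h3 : ∑' p, F p = ∑' n : ℕ, ∑' r : ℕ, F (n, r) :=
    Summable.tsum_prod' hFsum fun n => (hFsum.prod_factor n)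
  have h4 : ∀ n : ℕ, ∑' r : ℕ, F (n, r)
      = ∑ r ∈ Finset.range (n / 2 + 1), a t x (n - 2 * r) * b t y r := by
    intro n
    rw [tsum_eq_sum (s := Finset.range (n / 2 + 1))]
    · apply Finset.sum_congr rfl
      intro r hr
      rw [Finset.mem_range] at hr
      rw [hF]
      simp only
      rw [if_pos (by omega)]
    · intro r hr
      rw [Finset.mem_range] at hr
      rw [hF]
      simp only
      rw [if_neg (by omega)]
  rw [hprod, h2, h3]
  exact tsum_congr fun n => (h4 n).symm

end GLeven

/-- `|GL(j,q)| = q^{j²} ∏_{k=1}^j (1 - q^{-k})`, extended to a real parameter `q`. -/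
noncomputable def glOrder (q : ℝ) (j : ℕ) : ℝ :=
  q ^ (j ^ 2) * ∏ k ∈ Finset.range j, (1 - q⁻¹ ^ (k + 1))

namespace GLeven

lemma exponent_key (m r : ℕ) :
    (m + 2 * r) * ((m + 2 * r) - 1) / 2 + (m * (m + 1) / 2 + r)
      = r * (2 * m + r) + r * r + m * m := by
  have hrw : r * (2 * m + r) = 2 * (m * r) + r * r := by ring
  rw [hrw]
  have mul_pred_add : ∀ n : ℕ, n * (n - 1) + n = n * n := by
    intro n
    cases n with
    | zero => simp
    | succ k => simp [Nat.succ_sub_one]; ring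
  have even1 : ∀ n : ℕ, 2 * (n * (n - 1) / 2) = n * (n - 1) := by
    intro n
    cases n with
    | zero => simp
    | succ k =>
      simp only [Nat.succ_sub_one]
      obtain ⟨j, hj⟩ := Nat.even_mul_succ_self k
      have : (k + 1) * k = k * (k + 1) := by ring
      omega
  have e1 := even1 (m + 2 * r)
  have hn := mul_pred_add (m + 2 * r)
  have hexp : (m + 2 * r) * (m + 2 * r) = m * m + 4 * (m * r) + 4 * (r * r) := by ring
  rw [hexp] at hn
  have hj : 2 * (m * (m + 1) / 2) = m * (m + 1) := by
    obtain ⟨j, hj⟩ := Nat.even_mul_succ_self m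
    omega
  have hY2 : m * (m + 1) = m * m + m := by ring
  generalize hX : (m + 2 * r) * ((m + 2 * r) - 1) = X at e1 hn ⊢
  generalize hY : m * (m + 1) = Y at hj hY2 ⊢
  generalize hpm : m * m = pm at hn hY2 ⊢
  generalize hs : m * r = s at hn ⊢
  generalize hpr : r * r = pr at hn ⊢
  omega

set_option maxHeartbeats 1000000 in
lemma term_eq {q : ℝ} (hq : 1 < q) (u : ℝ) (m r : ℕ) :
    u ^ (m + 2 * r) * q ^ ((m + 2 * r) * ((m + 2 * r) - 1) / 2) *
      (1 / (q ^ (r * (2 * m + r)) * glOrder q r * glOrder q m))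
      = a q⁻¹ u m * b q⁻¹ (u ^ 2 * q⁻¹) r := by
  have hq0 : (0 : ℝ) < q := lt_trans one_pos hq
  have ht0 : (0 : ℝ) < q⁻¹ := inv_pos.2 hq0
  have ht1 : q⁻¹ < 1 := by rw [inv_lt_one_iff₀]; right; exact hq
  have hPm := P_pos ht0.le ht1 m
  have hPr := P_pos ht0.le ht1 r
  have hqpow : ∀ j : ℕ, (q : ℝ) ^ j ≠ 0 := fun j => pow_ne_zero j hq0.ne'
  have key := exponent_key m r
  have main : q ^ ((m + 2 * r) * ((m + 2 * r) - 1) / 2) * (q ^ (m * (m + 1) / 2) * q ^ r)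
      = q ^ (r * (2 * m + r)) * q ^ (r * r) * q ^ (m * m) := by
    rw [← pow_add, ← pow_add, ← pow_add, ← pow_add, key]
  have hglr : glOrder q r = q ^ (r * r) * P q⁻¹ r := by
    rw [glOrder, P, sq]
  have hglm : glOrder q m = q ^ (m * m) * P q⁻¹ m := by
    rw [glOrder, P, sq]
  rw [hglr, hglm, a, b]
  rw [inv_pow, mul_pow, inv_pow]
  rw [show u ^ (m + 2 * r) = u ^ m * (u ^ 2) ^ r by rw [pow_add, pow_mul]]
  set PM := P q⁻¹ m with hPM
  set PR := P q⁻¹ r with hPR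
  have hden : q ^ (r * (2 * m + r)) * (q ^ (r * r) * PR) * (q ^ (m * m) * PM)
      = q ^ ((m + 2 * r) * ((m + 2 * r) - 1) / 2) * q ^ (m * (m + 1) / 2) * q ^ r * PR * PM := by
    linear_combination (-(PR * PM)) * main
  rw [hden]
  have h1 : (q : ℝ) ^ ((m + 2 * r) * ((m + 2 * r) - 1) / 2) ≠ 0 := hqpow _
  have h2 : (q : ℝ) ^ (m * (m + 1) / 2) ≠ 0 := hqpow _
  have h3 : (q : ℝ) ^ r ≠ 0 := hqpow _
  have h4 : PM ≠ 0 := hPm.ne'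
  have h5 : PR ≠ 0 := hPr.ne'
  field_simp

end GLeven

set_option maxHeartbeats 1000000 in
/-- Sum = product identity for even characteristic general linear groups:
`∑_{n≥0} u^n q^{n(n-1)/2} ∑_{r=0}^{⌊n/2⌋} 1/(q^{r(2n-3r)} |GL(r,q)| |GL(n-2r,q)|)
  = ∏_{i≥1}(1+u/qⁱ) / ∏_{i≥1}(1-u²/qⁱ)`. -/
theorem sum_eq_product_GL_even (q u : ℝ) (hq : 1 < q) (hu : u ^ 2 < q) :
    ∑' n : ℕ, u ^ n * q ^ (n * (n - 1) / 2) *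
      ∑ r ∈ Finset.range (n / 2 + 1),
        1 / (q ^ (r * (2 * n - 3 * r)) * glOrder q r * glOrder q (n - 2 * r)) =
      (∏' i : ℕ, (1 + u / q ^ (i + 1))) / ∏' i : ℕ, (1 - u ^ 2 / q ^ (i + 1)) := by
  classical
  have hq0 : (0 : ℝ) < q := lt_trans one_pos hq
  have ht0 : (0 : ℝ) < q⁻¹ := inv_pos.2 hq0
  have ht1 : q⁻¹ < 1 := by rw [inv_lt_one_iff₀]; right; exact hq
  set t : ℝ := q⁻¹ with htdef
  have hy : |u ^ 2 * t| < 1 := by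
    rw [abs_of_nonneg (mul_nonneg (sq_nonneg u) ht0.le)]
    rw [htdef, ← div_eq_mul_inv, div_lt_one hq0]
    exact hu
  -- step 1: rewrite the LHS termwise
  have step1 : ∀ n : ℕ,
      u ^ n * q ^ (n * (n - 1) / 2) *
        ∑ r ∈ Finset.range (n / 2 + 1),
          1 / (q ^ (r * (2 * n - 3 * r)) * glOrder q r * glOrder q (n - 2 * r))
      = ∑ r ∈ Finset.range (n / 2 + 1), GLeven.a t u (n - 2 * r)
          * GLeven.b t (u ^ 2 * t) r := by
    intro n
    rw [Finset.mul_sum]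
    apply Finset.sum_congr rfl
    intro r hr
    rw [Finset.mem_range] at hr
    have h2r : 2 * r ≤ n := by omega
    obtain ⟨m, rfl⟩ : ∃ m, n = m + 2 * r := ⟨n - 2 * r, by omega⟩
    rw [show m + 2 * r - 2 * r = m from by omega,
      show 2 * (m + 2 * r) - 3 * r = 2 * m + r from by omega]
    exact GLeven.term_eq hq u m r
  rw [tsum_congr step1]
  rw [GLeven.sum_eq_mul ht0 ht1 u hy]
  -- step 3: A = first tprod
  have hxabs : |u * t| < 1 := by
    rw [abs_mul, abs_of_nonneg ht0.le]
    have huq : |u| < q := by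
      by_contra h
      push_neg at h
      have h1 : q * q ≤ |u| * |u| := mul_le_mul h h (le_of_lt hq0) (abs_nonneg u)
      have h2 : |u| * |u| = u ^ 2 := by rw [← abs_mul, sq, abs_mul_self]
      nlinarith
    calc |u| * t < q * t := mul_lt_mul_of_pos_right huq ht0
      _ = 1 := by rw [htdef]; field_simp
  have hA : GLeven.A t u = ∏' i : ℕ, (1 + u / q ^ (i + 1)) := by
    rw [GLeven.A_eq_tprod ht0 ht1 hxabs]
    apply tprod_congr
    intro i
    rw [htdef, inv_pow, div_eq_mul_inv]
  -- step 4: B * second tprod = 1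
  have hB := GLeven.B_mul_tprod ht0 ht1 hy
  have htp2 : (∏' i : ℕ, (1 - u ^ 2 * t * t ^ i)) = ∏' i : ℕ, (1 - u ^ 2 / q ^ (i + 1)) := by
    apply tprod_congr
    intro i
    rw [htdef, show u ^ 2 * q⁻¹ * q⁻¹ ^ i = u ^ 2 * q⁻¹ ^ (i + 1) by rw [pow_succ]; ring,
      inv_pow, div_eq_mul_inv]
  rw [htp2] at hB
  have hBval : GLeven.B t (u ^ 2 * t) = (∏' i : ℕ, (1 - u ^ 2 / q ^ (i + 1)))⁻¹ :=
    eq_inv_of_mul_eq_one_left hB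
  rw [hA, hBval, div_eq_mul_inv]
end

section
/- For real q > 1 and real u with |u| < q, ∑_{n≥0} u^n q^{n^2} ∑_{r=0}^{n} 1/(|Sp(2r,q)| |Sp(2n-2r,q)|) = ∏_{i≥1}(1 + u/q^{2i})^2 / ∏_{i≥1}(1 - u^2/q^{2i}). -/
open Finset Filter Topology

/-- `|Sp(2m,q)| = q^{m²} ∏_{i=1}^m (q^{2i} - 1)`, extended to a real parameter `q`. -/
noncomputable def spOrder (q : ℝ) (m : ℕ) : ℝ :=
  q ^ (m ^ 2) * ∏ i ∈ Finset.range m, (q ^ (2 * (i + 1)) - 1)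

namespace SpAux

noncomputable def P (y : ℝ) (k : ℕ) : ℝ := ∏ i ∈ Finset.range k, (1 - y ^ (2 * (i + 1)))

noncomputable def Pc (y : ℝ) : ℝ := Real.exp (-(y ^ 2 / (1 - y ^ 2) / (1 - y ^ 2)))

noncomputable def F (y t : ℝ) (a : ℕ) : ℝ := t ^ a * y ^ (a ^ 2 + a) / P y a

noncomputable def E (y s : ℝ) (m : ℕ) : ℝ := s ^ m / P y m

variable {y : ℝ} (hy0 : 0 < y) (hy1 : y < 1)

lemma P_zero : P y 0 = 1 := by simp [P]

lemma P_succ (k : ℕ) : P y (k + 1) = P y k * (1 - y ^ (2 * (k + 1))) := by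
  simp [P, Finset.prod_range_succ]

include hy0 hy1 in
lemma P_pos (k : ℕ) : 0 < P y k := by
  refine Finset.prod_pos fun i _ => ?_
  have : y ^ (2 * (i + 1)) < 1 := pow_lt_one₀ hy0.le hy1 (by omega)
  linarith

include hy0 hy1 in
lemma sq_lt_one : y ^ 2 < 1 := pow_lt_one₀ hy0.le hy1 (by norm_num)

include hy0 hy1 in
lemma sum_pow_le (k : ℕ) : ∑ i ∈ Finset.range k, y ^ (2 * (i + 1)) ≤ y ^ 2 / (1 - y ^ 2) := by
  have h1 : y ^ 2 < 1 := sq_lt_one hy0 hy1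
  have h0 : (0:ℝ) ≤ y ^ 2 := sq_nonneg y
  have : ∀ i, y ^ (2 * (i + 1)) = (y ^ 2) ^ (i + 1) := fun i => by
    rw [← pow_mul]
  calc ∑ i ∈ Finset.range k, y ^ (2 * (i + 1))
      = y ^ 2 * ∑ i ∈ Finset.range k, (y ^ 2) ^ i := by
        rw [Finset.mul_sum]; exact Finset.sum_congr rfl fun i _ => by rw [this, pow_succ']
    _ ≤ y ^ 2 * (1 - y ^ 2)⁻¹ := by
        refine mul_le_mul_of_nonneg_left ?_ h0
        refine (Summable.sum_le_tsum _ (fun i _ => pow_nonneg h0 i) ?_).trans_eq (tsum_geometric_of_lt_one h0 h1)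
        exact summable_geometric_of_lt_one h0 h1
    _ = y ^ 2 / (1 - y ^ 2) := by rw [div_eq_mul_inv]

lemma exp_le_one_sub {t T : ℝ} (h0 : 0 ≤ t) (h1 : t ≤ T) (h2 : T < 1) :
    Real.exp (-(t / (1 - T))) ≤ 1 - t := by
  have ht1 : t < 1 := lt_of_le_of_lt h1 h2
  have hpos : (0:ℝ) < 1 - t := by linarith
  have hT : (0:ℝ) < 1 - T := by linarith
  rw [← Real.exp_log hpos]
  apply Real.exp_le_exp.2
  have hlog : Real.log (1 - t)⁻¹ ≤ (1 - t)⁻¹ - 1 :=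
    Real.log_le_sub_one_of_pos (by positivity)
  have hinv : (1 - t)⁻¹ - 1 = t / (1 - t) := by field_simp; ring
  have : Real.log (1 - t)⁻¹ ≤ t / (1 - T) := by
    rw [hinv] at hlog
    refine hlog.trans ?_
    exact div_le_div_of_nonneg_left h0 hT (by linarith)
  rw [Real.log_inv] at this
  linarith

include hy0 hy1 in
lemma Pc_le_P (k : ℕ) : Pc y ≤ P y k := by
  have h1 : y ^ 2 < 1 := sq_lt_one hy0 hy1
  have hT : (0:ℝ) < 1 - y ^ 2 := by linarith
  calc Pc y = Real.exp (-(y ^ 2 / (1 - y ^ 2)) / (1 - y ^ 2)) := by rw [Pc]; ring_nf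
    _ ≤ Real.exp (-(∑ i ∈ Finset.range k, y ^ (2 * (i + 1))) / (1 - y ^ 2)) := by
        apply Real.exp_le_exp.2
        exact div_le_div_of_nonneg_right (neg_le_neg (sum_pow_le hy0 hy1 k)) hT.le |>.trans_eq rfl
    _ = ∏ i ∈ Finset.range k, Real.exp (-(y ^ (2 * (i + 1)) / (1 - y ^ 2))) := by
        rw [← Real.exp_sum]; congr 1
        rw [neg_div, Finset.sum_div, ← Finset.sum_neg_distrib]
    _ ≤ P y k := by
        apply Finset.prod_le_prod (fun i _ => (Real.exp_pos _).le)
        intro i _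
        exact exp_le_one_sub (by positivity) (pow_le_pow_of_le_one hy0.le hy1.le (by omega)) h1

lemma Pc_pos : 0 < Pc y := Real.exp_pos _


include hy0 hy1 in
lemma abs_F_le (t : ℝ) (a : ℕ) : |F y t a| ≤ (|t| * y) ^ a / Pc y := by
  have hP := P_pos hy0 hy1 a
  have hPc := Pc_pos (y := y)
  rw [F, abs_div, abs_mul, abs_pow, abs_pow, abs_of_pos hP, abs_of_pos hy0]
  rw [mul_pow]
  apply div_le_div₀ (by positivity) ?_ hPc (Pc_le_P hy0 hy1 a)
  have : y ^ (a ^ 2 + a) ≤ y ^ a := pow_le_pow_of_le_one hy0.le hy1.le (by nlinarith)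
  exact mul_le_mul_of_nonneg_left this (by positivity)

include hy0 hy1 in
lemma summable_abs_F {t : ℝ} (ht : |t| * y < 1) : Summable fun a => |F y t a| := by
  refine Summable.of_nonneg_of_le (fun a => abs_nonneg _) (abs_F_le hy0 hy1 t) ?_
  exact (summable_geometric_of_lt_one (by positivity) ht).div_const _

include hy0 hy1 in
lemma summable_F {t : ℝ} (ht : |t| * y < 1) : Summable (F y t) :=
  (summable_abs_F hy0 hy1 ht).of_abs

include hy0 hy1 in
lemma abs_E_le (s : ℝ) (m : ℕ) : |E y s m| ≤ |s| ^ m / Pc y := by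
  have hP := P_pos hy0 hy1 m
  rw [E, abs_div, abs_pow, abs_of_pos hP]
  exact div_le_div₀ (by positivity) le_rfl (Pc_pos) (Pc_le_P hy0 hy1 m)

include hy0 hy1 in
lemma summable_abs_E {s : ℝ} (hs : |s| < 1) : Summable fun m => |E y s m| := by
  refine Summable.of_nonneg_of_le (fun a => abs_nonneg _) (abs_E_le hy0 hy1 s) ?_
  exact (summable_geometric_of_lt_one (by positivity) hs).div_const _

include hy0 hy1 in
lemma summable_E {s : ℝ} (hs : |s| < 1) : Summable (E y s) :=
  (summable_abs_E hy0 hy1 hs).of_abs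


include hy0 hy1 in
lemma F_step (t : ℝ) (a : ℕ) :
    F y t (a + 1) = F y (t * y ^ 2) (a + 1) + t * y ^ 2 * F y (t * y ^ 2) a := by
  have hPa := (P_pos hy0 hy1 a).ne'
  have hPa1 := (P_pos hy0 hy1 (a + 1)).ne'
  rw [F, F, F, P_succ]
  have h1 : (1 : ℝ) - y ^ (2 * (a + 1)) ≠ 0 := by
    have := P_succ (y := y) a
    intro h
    rw [h, mul_zero] at this
    exact hPa1 (by rw [this])
  field_simp
  ring

lemma F_zero (t : ℝ) : F y t 0 = 1 := by simp [F, P_zero]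

include hy0 hy1 in
lemma g_funeq {t : ℝ} (ht : |t| * y < 1) :
    ∑' a, F y t a = (1 + t * y ^ 2) * ∑' a, F y (t * y ^ 2) a := by
  have hy2 : |t * y ^ 2| * y < 1 := by
    have h2 : y ^ 2 ≤ 1 := (sq_lt_one hy0 hy1).le
    have h3 : |t * y ^ 2| * y ≤ |t| * y := by
      rw [abs_mul, abs_pow, abs_of_pos hy0]
      have h4 : y ^ 2 * y ≤ 1 * y := mul_le_mul_of_nonneg_right h2 hy0.le
      nlinarith [abs_nonneg t]
    linarith
  have hS := summable_F hy0 hy1 ht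
  have hS2 := summable_F hy0 hy1 hy2
  rw [Summable.tsum_eq_zero_add hS, Summable.tsum_eq_zero_add hS2, F_zero, F_zero]
  have hadd : Summable fun a => F y (t * y ^ 2) (a + 1) := by
    exact (summable_nat_add_iff 1).2 hS2
  have hmul : Summable fun a => t * y ^ 2 * F y (t * y ^ 2) a := hS2.mul_left _
  calc 1 + ∑' a, F y t (a + 1)
      = 1 + ∑' a, (F y (t * y ^ 2) (a + 1) + t * y ^ 2 * F y (t * y ^ 2) a) := by
        congr 1; exact tsum_congr fun a => F_step hy0 hy1 t a
    _ = 1 + (∑' a, F y (t * y ^ 2) (a + 1) + ∑' a, t * y ^ 2 * F y (t * y ^ 2) a) := by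
        rw [Summable.tsum_add hadd hmul]
    _ = (1 + t * y ^ 2) * (1 + ∑' a, F y (t * y ^ 2) (a + 1)) := by
        rw [tsum_mul_left]
        rw [Summable.tsum_eq_zero_add hS2, F_zero]
        ring

include hy0 hy1 in
lemma abs_arg_le {u : ℝ} (N : ℕ) : |u * y ^ (2 * N)| ≤ |u| := by
  rw [abs_mul, abs_pow, abs_of_pos hy0]
  have : y ^ (2 * N) ≤ 1 := pow_le_one₀ hy0.le hy1.le
  nlinarith [abs_nonneg u]

include hy0 hy1 in
lemma g_prod {u : ℝ} (hu : |u| * y < 1) (N : ℕ) :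
    ∑' a, F y u a =
      (∏ i ∈ Finset.range N, (1 + u * y ^ (2 * (i + 1)))) * ∑' a, F y (u * y ^ (2 * N)) a := by
  induction N with
  | zero => simp
  | succ N ih =>
    have harg : |u * y ^ (2 * N)| * y < 1 :=
      lt_of_le_of_lt (mul_le_mul_of_nonneg_right (abs_arg_le hy0 hy1 N) hy0.le) hu
    rw [ih, g_funeq hy0 hy1 harg, Finset.prod_range_succ]
    have h1 : u * y ^ (2 * N) * y ^ 2 = u * y ^ (2 * (N + 1)) := by ring
    have h2 : (1 : ℝ) + u * y ^ (2 * N) * y ^ 2 = 1 + u * y ^ (2 * (N + 1)) := by rw [h1]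
    rw [h1]
    ring

set_option maxHeartbeats 1000000 in
include hy0 hy1 in
lemma g_tail_bound {u t : ℝ} (hu : |u| * y < 1) (htu : |t| ≤ |u|) :
    |(∑' a, F y t a) - 1| ≤ |t| * ((1 - |u| * y)⁻¹ / Pc y) := by
  have ht : |t| * y < 1 := lt_of_le_of_lt (mul_le_mul_of_nonneg_right htu hy0.le) hu
  have hS := summable_F hy0 hy1 ht
  rw [Summable.tsum_eq_zero_add hS, F_zero]
  simp only [add_sub_cancel_left]
  have hb : ∀ a : ℕ, |F y t (a + 1)| ≤ |t| * ((|u| * y) ^ a / Pc y) := by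
    intro a
    refine (abs_F_le hy0 hy1 t (a + 1)).trans ?_
    have key : (|t| * y) ^ (a + 1) ≤ |t| * (|u| * y) ^ a := by
      have h5 : (|t| * y) ^ a ≤ (|u| * y) ^ a :=
        pow_le_pow_left₀ (by positivity) (mul_le_mul_of_nonneg_right htu hy0.le) a
      calc (|t| * y) ^ (a + 1) = (|t| * y) * (|t| * y) ^ a := by rw [pow_succ']
        _ ≤ (|t| * 1) * (|u| * y) ^ a := by
            apply mul_le_mul ?_ h5 (by positivity) (by positivity)
            nlinarith [abs_nonneg t]
        _ = |t| * (|u| * y) ^ a := by ring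
    calc (|t| * y) ^ (a + 1) / Pc y ≤ (|t| * (|u| * y) ^ a) / Pc y :=
          div_le_div_of_nonneg_right key (Pc_pos).le
      _ = |t| * ((|u| * y) ^ a / Pc y) := by rw [mul_div_assoc]
  have hs1 : Summable fun a => |F y t (a + 1)| :=
    (summable_nat_add_iff 1).2 (summable_abs_F hy0 hy1 ht)
  have hs2 : Summable fun a : ℕ => |t| * ((|u| * y) ^ a / Pc y) :=
    (((summable_geometric_of_lt_one (by positivity) hu).div_const _).mul_left _)
  calc |∑' a, F y t (a + 1)| ≤ ∑' a, |F y t (a + 1)| := by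
        have := norm_tsum_le_tsum_norm (f := fun a => F y t (a + 1)) (by simpa [Real.norm_eq_abs] using hs1)
        simpa [Real.norm_eq_abs] using this
    _ ≤ ∑' a : ℕ, |t| * ((|u| * y) ^ a / Pc y) := Summable.tsum_le_tsum hb hs1 hs2
    _ = |t| * ((1 - |u| * y)⁻¹ / Pc y) := by
        rw [tsum_mul_left, tsum_div_const, tsum_geometric_of_lt_one (by positivity) hu]

include hy0 hy1 in
lemma tendsto_g_tail {u : ℝ} (hu : |u| * y < 1) :
    Tendsto (fun N => ∑' a, F y (u * y ^ (2 * N)) a) atTop (𝓝 1) := by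
  set K := (1 - |u| * y)⁻¹ / Pc y with hK
  have hKpos : 0 ≤ K := by
    rw [hK]
    exact div_nonneg (inv_nonneg.2 (by linarith)) (Pc_pos).le
  have hb : ∀ N : ℕ, |(∑' a, F y (u * y ^ (2 * N)) a) - 1| ≤ (|u| * K) * (y ^ 2) ^ N := by
    intro N
    have := g_tail_bound hy0 hy1 hu (abs_arg_le hy0 hy1 (u := u) N)
    refine this.trans ?_
    rw [abs_mul, abs_pow, abs_of_pos hy0, ← pow_mul]
    apply le_of_eq
    ring
  have h0 : Tendsto (fun N : ℕ => (|u| * K) * (y ^ 2) ^ N) atTop (𝓝 0) := by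
    have := (tendsto_pow_atTop_nhds_zero_of_lt_one (sq_nonneg y) (sq_lt_one hy0 hy1)).const_mul (|u| * K)
    simpa using this
  have := squeeze_zero_norm (f := fun N => (∑' a, F y (u * y ^ (2 * N)) a) - 1)
    (fun N => by simpa [Real.norm_eq_abs] using hb N) h0
  have h2 := this.add (tendsto_const_nhds (x := (1:ℝ)))
  simpa using h2

lemma multipliable_one_add {f : ℕ → ℝ} (hf : Summable f) {c : ℝ} (hb : ∀ i, |f i| ≤ c)
    (hc : c < 1) : Multipliable fun i => 1 + f i := by
  have hpos : ∀ i, 0 < 1 + f i := by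
    intro i
    have := abs_le.1 (hb i)
    linarith [this.1]
  have hlog : Summable fun i => Real.log (1 + f i) := by
    have hc0 : 0 ≤ c := (abs_nonneg _).trans (hb 0)
    refine Summable.of_norm_bounded (g := fun i => |f i| / (1 - c)) ((hf.abs).div_const _) ?_
    intro i
    have hfi : |(-(f i))| < 1 := by rw [abs_neg]; exact lt_of_le_of_lt (hb i) hc
    have := Real.abs_log_sub_add_sum_range_le hfi 0
    simp only [Finset.range_zero, Finset.sum_empty, zero_add, pow_one] at this
    rw [sub_neg_eq_add] at this
    rw [Real.norm_eq_abs]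
    refine this.trans ?_
    rw [abs_neg]
    apply div_le_div₀ (abs_nonneg _) le_rfl (by linarith [lt_of_le_of_lt (hb i) hc]) ?_
    have := hb i
    linarith
  exact Real.multipliable_of_summable_log hpos hlog

include hy0 hy1 in
lemma summable_geom_shift (r : ℝ) : Summable fun i : ℕ => r * y ^ (2 * (i + 1)) := by
  have : Summable fun i : ℕ => (r * y ^ 2) * (y ^ 2) ^ i :=
    ((summable_geometric_of_lt_one (sq_nonneg y) (sq_lt_one hy0 hy1)).mul_left _)
  refine this.congr fun i => ?_
  rw [← pow_mul]
  ring

include hy0 hy1 in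
lemma abs_term_le {r : ℝ} (i : ℕ) : |r * y ^ (2 * (i + 1))| ≤ |r| * y := by
  rw [abs_mul, abs_pow, abs_of_pos hy0]
  have h1 : y ^ (2 * (i + 1)) ≤ y := by
    calc y ^ (2 * (i + 1)) ≤ y ^ 1 := pow_le_pow_of_le_one hy0.le hy1.le (by omega)
      _ = y := pow_one y
  nlinarith [abs_nonneg r]

include hy0 hy1 in
lemma tprod_g {u : ℝ} (hu : |u| * y < 1) :
    ∏' i : ℕ, (1 + u * y ^ (2 * (i + 1))) = ∑' a, F y u a := by
  have hm : Multipliable fun i : ℕ => 1 + u * y ^ (2 * (i + 1)) :=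
    multipliable_one_add (summable_geom_shift hy0 hy1 u) (abs_term_le hy0 hy1) hu
  have h1 := hm.hasProd.tendsto_prod_nat
  have h2 := h1.mul (tendsto_g_tail hy0 hy1 hu)
  have h3 : Tendsto (fun _ : ℕ => ∑' a, F y u a) atTop
      (𝓝 ((∏' i : ℕ, (1 + u * y ^ (2 * (i + 1)))) * 1)) := by
    refine Tendsto.congr (fun N => (g_prod hy0 hy1 hu N).symm) h2
  have := tendsto_nhds_unique h3 tendsto_const_nhds
  rw [← this, mul_one]

lemma E_zero (s : ℝ) : E y s 0 = 1 := by simp [E, P_zero]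

include hy0 hy1 in
lemma E_step (s : ℝ) (m : ℕ) :
    E y s (m + 1) - s * E y s m = E y (s * y ^ 2) (m + 1) := by
  have hPm := (P_pos hy0 hy1 m).ne'
  have hPm1 := (P_pos hy0 hy1 (m + 1)).ne'
  rw [E, E, E, P_succ]
  have h1 : (1 : ℝ) - y ^ (2 * (m + 1)) ≠ 0 := by
    have := P_succ (y := y) m
    intro h
    rw [h, mul_zero] at this
    exact hPm1 (by rw [this])
  field_simp
  ring

include hy0 hy1 in
lemma e_funeq {s : ℝ} (hs : |s| < 1) :
    (1 - s) * ∑' m, E y s m = ∑' m, E y (s * y ^ 2) m := by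
  have hs2 : |s * y ^ 2| < 1 := by
    rw [abs_mul, abs_pow, abs_of_pos hy0]
    have h2 : y ^ 2 ≤ 1 := (sq_lt_one hy0 hy1).le
    nlinarith [abs_nonneg s]
  have hS := summable_E hy0 hy1 hs
  have hS2 := summable_E hy0 hy1 hs2
  have hadd : Summable fun m => E y s (m + 1) := (summable_nat_add_iff 1).2 hS
  have hmul : Summable fun m => s * E y s m := hS.mul_left _
  have hsub : Summable fun m => E y s (m + 1) - s * E y s m := hadd.sub hmul
  calc (1 - s) * ∑' m, E y s m
      = ∑' m, E y s m - ∑' m, s * E y s m := by rw [tsum_mul_left]; ring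
    _ = (1 + ∑' m, E y s (m + 1)) - ∑' m, s * E y s m := by
        rw [Summable.tsum_eq_zero_add hS, E_zero]
    _ = 1 + ∑' m, (E y s (m + 1) - s * E y s m) := by
        rw [Summable.tsum_sub hadd hmul]; ring
    _ = 1 + ∑' m, E y (s * y ^ 2) (m + 1) := by
        congr 1; exact tsum_congr fun m => E_step hy0 hy1 s m
    _ = ∑' m, E y (s * y ^ 2) m := by
        rw [Summable.tsum_eq_zero_add hS2, E_zero]

include hy0 hy1 in
lemma abs_arg_le' {s : ℝ} (N : ℕ) : |s * y ^ (2 * N)| ≤ |s| := by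
  rw [abs_mul, abs_pow, abs_of_pos hy0]
  have : y ^ (2 * N) ≤ 1 := pow_le_one₀ hy0.le hy1.le
  nlinarith [abs_nonneg s]

include hy0 hy1 in
lemma e_prod {s : ℝ} (hs : |s| < 1) (N : ℕ) :
    (∏ i ∈ Finset.range N, (1 - s * y ^ (2 * i))) * ∑' m, E y s m =
      ∑' m, E y (s * y ^ (2 * N)) m := by
  induction N with
  | zero => simp
  | succ N ih =>
    have harg : |s * y ^ (2 * N)| < 1 := lt_of_le_of_lt (abs_arg_le' hy0 hy1 N) hs
    rw [Finset.prod_range_succ]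
    have h1 : s * y ^ (2 * N) * y ^ 2 = s * y ^ (2 * (N + 1)) := by ring
    calc (∏ i ∈ Finset.range N, (1 - s * y ^ (2 * i))) * (1 - s * y ^ (2 * N)) * ∑' m, E y s m
        = (1 - s * y ^ (2 * N)) * ((∏ i ∈ Finset.range N, (1 - s * y ^ (2 * i))) * ∑' m, E y s m) := by
          ring
      _ = (1 - s * y ^ (2 * N)) * ∑' m, E y (s * y ^ (2 * N)) m := by rw [ih]
      _ = ∑' m, E y (s * y ^ (2 * N) * y ^ 2) m := e_funeq hy0 hy1 harg
      _ = ∑' m, E y (s * y ^ (2 * (N + 1))) m := by rw [h1]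

set_option maxHeartbeats 1000000 in
include hy0 hy1 in
lemma e_tail_bound {s t : ℝ} (hs : |s| < 1) (hts : |t| ≤ |s|) :
    |(∑' m, E y t m) - 1| ≤ |t| * ((1 - |s|)⁻¹ / Pc y) := by
  have ht : |t| < 1 := lt_of_le_of_lt hts hs
  have hS := summable_E hy0 hy1 ht
  rw [Summable.tsum_eq_zero_add hS, E_zero]
  simp only [add_sub_cancel_left]
  have hb : ∀ m : ℕ, |E y t (m + 1)| ≤ |t| * (|s| ^ m / Pc y) := by
    intro m
    refine (abs_E_le hy0 hy1 t (m + 1)).trans ?_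
    have key : |t| ^ (m + 1) ≤ |t| * |s| ^ m := by
      rw [pow_succ']
      exact mul_le_mul_of_nonneg_left (pow_le_pow_left₀ (abs_nonneg t) hts m) (abs_nonneg t)
    calc |t| ^ (m + 1) / Pc y ≤ (|t| * |s| ^ m) / Pc y :=
          div_le_div_of_nonneg_right key (Pc_pos).le
      _ = |t| * (|s| ^ m / Pc y) := by rw [mul_div_assoc]
  have hs1 : Summable fun m => |E y t (m + 1)| :=
    (summable_nat_add_iff 1).2 (summable_abs_E hy0 hy1 ht)
  have hs2 : Summable fun m : ℕ => |t| * (|s| ^ m / Pc y) :=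
    (((summable_geometric_of_lt_one (abs_nonneg s) hs).div_const _).mul_left _)
  calc |∑' m, E y t (m + 1)| ≤ ∑' m, |E y t (m + 1)| := by
        have := norm_tsum_le_tsum_norm (f := fun m => E y t (m + 1)) (by simpa [Real.norm_eq_abs] using hs1)
        simpa [Real.norm_eq_abs] using this
    _ ≤ ∑' m : ℕ, |t| * (|s| ^ m / Pc y) := Summable.tsum_le_tsum hb hs1 hs2
    _ = |t| * ((1 - |s|)⁻¹ / Pc y) := by
        rw [tsum_mul_left, tsum_div_const, tsum_geometric_of_lt_one (abs_nonneg s) hs]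

include hy0 hy1 in
lemma tendsto_e_tail {s : ℝ} (hs : |s| < 1) :
    Tendsto (fun N => ∑' m, E y (s * y ^ (2 * N)) m) atTop (𝓝 1) := by
  set K := (1 - |s|)⁻¹ / Pc y with hK
  have hb : ∀ N : ℕ, |(∑' m, E y (s * y ^ (2 * N)) m) - 1| ≤ (|s| * K) * (y ^ 2) ^ N := by
    intro N
    have := e_tail_bound hy0 hy1 hs (abs_arg_le' hy0 hy1 (s := s) N)
    refine this.trans ?_
    rw [abs_mul, abs_pow, abs_of_pos hy0, ← pow_mul]
    apply le_of_eq
    ring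
  have h0 : Tendsto (fun N : ℕ => (|s| * K) * (y ^ 2) ^ N) atTop (𝓝 0) := by
    have := (tendsto_pow_atTop_nhds_zero_of_lt_one (sq_nonneg y) (sq_lt_one hy0 hy1)).const_mul (|s| * K)
    simpa using this
  have := squeeze_zero_norm (f := fun N => (∑' m, E y (s * y ^ (2 * N)) m) - 1)
    (fun N => by simpa [Real.norm_eq_abs] using hb N) h0
  have h2 := this.add (tendsto_const_nhds (x := (1:ℝ)))
  simpa using h2

include hy0 hy1 in
lemma abs_term_le2 {w : ℝ} (i : ℕ) : |w * y ^ (2 * (i + 1))| ≤ |w| * y ^ 2 := by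
  rw [abs_mul, abs_pow, abs_of_pos hy0]
  have h1 : y ^ (2 * (i + 1)) ≤ y ^ 2 := pow_le_pow_of_le_one hy0.le hy1.le (by omega)
  nlinarith [abs_nonneg w]

include hy0 hy1 in
lemma tprod_e {w : ℝ} (hw : |w| * y ^ 2 < 1) :
    (∏' i : ℕ, (1 - w * y ^ (2 * (i + 1)))) * (∑' m, E y (w * y ^ 2) m) = 1 := by
  have hs : |w * y ^ 2| < 1 := by
    rw [abs_mul, abs_pow, abs_of_pos hy0]; exact hw
  have hm : Multipliable fun i : ℕ => 1 - w * y ^ (2 * (i + 1)) := by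
    have := multipliable_one_add (f := fun i => -(w * y ^ (2 * (i + 1))))
      ((summable_geom_shift hy0 hy1 w).neg) (c := |w| * y ^ 2)
      (fun i => by rw [abs_neg]; exact abs_term_le2 hy0 hy1 i) hw
    refine this.congr fun i => by ring
  have h1 := hm.hasProd.tendsto_prod_nat
  have h2 := h1.mul (tendsto_const_nhds (x := ∑' m, E y (w * y ^ 2) m))
  have h3 : Tendsto (fun N => ∑' m, E y ((w * y ^ 2) * y ^ (2 * N)) m) atTop
      (𝓝 ((∏' i : ℕ, (1 - w * y ^ (2 * (i + 1)))) * ∑' m, E y (w * y ^ 2) m)) := by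
    refine Tendsto.congr (fun N => ?_) h2
    have := e_prod hy0 hy1 hs N
    rw [← this]
    congr 1
    refine Finset.prod_congr rfl fun i _ => ?_
    have : w * y ^ 2 * y ^ (2 * i) = w * y ^ (2 * (i + 1)) := by ring
    rw [this]
  exact tendsto_nhds_unique h3 (tendsto_e_tail hy0 hy1 hs)

noncomputable def Q (y : ℝ) (n m : ℕ) : ℝ := P y n / (P y (n - m) * P y m)

include hy0 hy1 in
lemma P_ne (k : ℕ) : P y k ≠ 0 := (P_pos hy0 hy1 k).ne'

include hy0 hy1 in
lemma fac_ne (j : ℕ) : (1 : ℝ) - y ^ (2 * (j + 1)) ≠ 0 := by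
  have : y ^ (2 * (j + 1)) < 1 := pow_lt_one₀ hy0.le hy1 (by omega)
  linarith

include hy0 hy1 in
lemma Q_zero (n : ℕ) : Q y n 0 = 1 := by
  rw [Q, Nat.sub_zero, P_zero, mul_one, div_self (P_ne hy0 hy1 n)]

include hy0 hy1 in
lemma Q_self (n : ℕ) : Q y n n = 1 := by
  rw [Q, Nat.sub_self, P_zero, one_mul, div_self (P_ne hy0 hy1 n)]

-- case m = 0, s = c+1
include hy0 hy1 in
lemma case_m0 (r c : ℕ) :
    y ^ (2 * ((r + 1 - 0) * (c + 1 - 0))) * Q y (r + 1) 0 * Q y (c + 1) 0 * P y 0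
      - y ^ (2 * ((r - 0) * (c + 1 - 0))) * Q y r 0 * Q y (c + 1) 0 * P y 0
      = - (y ^ (2 * ((r + 1 - 1) * (c + 1 - 1) + (r + 1 - 1))) * Q y r 0 * Q y (c + 1) 1 * P y 1) := by
  rw [Q_zero hy0 hy1, Q_zero hy0 hy1, Q_zero hy0 hy1, P_zero]
  have h1 : c + 1 - 1 = c := by omega
  have h2 : r + 1 - 1 = r := by omega
  rw [h1, h2, Q]
  have h3 : c + 1 - 1 = c := by omega
  rw [h3]
  have hP1 : P y 1 = 1 - y ^ (2 * (0 + 1)) := by rw [show (1:ℕ) = 0 + 1 from rfl, P_succ, P_zero, one_mul]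
  have hPc1 : P y (c + 1) = P y c * (1 - y ^ (2 * (c + 1))) := P_succ c
  rw [hP1, hPc1]
  have hc := P_ne hy0 hy1 c
  have h4 := fac_ne hy0 hy1 0
  field_simp
  simp only [Nat.sub_zero]; ring

-- Pascal case : m = k+1, s = k+1 (b = 0), r = a+k+1
include hy0 hy1 in
lemma case_pascal (a k : ℕ) :
    y ^ (2 * ((a + 1) * 0)) * Q y (a + k + 2) (k + 1) * Q y (k + 1) (k + 1) * P y (k + 1)
      - y ^ (2 * (a * 0)) * Q y (a + k + 1) (k + 1) * Q y (k + 1) (k + 1) * P y (k + 1)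
      = y ^ (2 * ((a + 1) * 0 + (a + 1))) * Q y (a + k + 1) k * Q y (k + 1) (k + 1) * P y (k + 1) := by
  rw [Q_self hy0 hy1]
  simp only [Nat.mul_zero, Nat.zero_add, pow_zero, mul_one, one_mul, Nat.mul_comm]
  rw [Q, Q, Q]
  have h1 : a + k + 2 - (k + 1) = a + 1 := by omega
  have h2 : a + k + 1 - (k + 1) = a := by omega
  have h3 : a + k + 1 - k = a + 1 := by omega
  rw [h1, h2, h3]
  have e1 : P y (a + k + 2) = P y (a + k + 1) * (1 - y ^ (2 * (a + k + 2))) := by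
    have := P_succ (y := y) (a + k + 1); rwa [show a + k + 1 + 1 = a + k + 2 from rfl] at this
  have e2 : P y (a + 1) = P y a * (1 - y ^ (2 * (a + 1))) := P_succ a
  have e3 : P y (k + 1) = P y k * (1 - y ^ (2 * (k + 1))) := P_succ k
  rw [e1, e2, e3]
  have na := P_ne hy0 hy1 a
  have nk := P_ne hy0 hy1 k
  have nak := P_ne hy0 hy1 (a + k + 1)
  have f1 := fac_ne hy0 hy1 a
  have f2 := fac_ne hy0 hy1 k
  have f3 := fac_ne hy0 hy1 (a + k + 1)
  field_simp
  ring

-- main case : m = k+1, r = a+k+1, s = c+k+2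
include hy0 hy1 in
lemma case_main (a c k : ℕ) :
    y ^ (2 * ((a + 1) * (c + 1))) * Q y (a + k + 2) (k + 1) * Q y (c + k + 2) (k + 1) * P y (k + 1)
      - y ^ (2 * (a * (c + 1))) * Q y (a + k + 1) (k + 1) * Q y (c + k + 2) (k + 1) * P y (k + 1)
      = y ^ (2 * ((a + 1) * (c + 1) + (a + 1))) * Q y (a + k + 1) k * Q y (c + k + 2) (k + 1) * P y (k + 1)
        - y ^ (2 * (a * c + a)) * Q y (a + k + 1) (k + 1) * Q y (c + k + 2) (k + 2) * P y (k + 2) := by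
  rw [Q, Q, Q, Q, Q]
  have h1 : a + k + 2 - (k + 1) = a + 1 := by omega
  have h2 : c + k + 2 - (k + 1) = c + 1 := by omega
  have h3 : a + k + 1 - (k + 1) = a := by omega
  have h4 : a + k + 1 - k = a + 1 := by omega
  have h5 : c + k + 2 - (k + 2) = c := by omega
  rw [h1, h2, h3, h4, h5]
  have e1 : P y (a + k + 2) = P y (a + k + 1) * (1 - y ^ (2 * (a + k + 2))) := by
    have := P_succ (y := y) (a + k + 1); rwa [show a + k + 1 + 1 = a + k + 2 from rfl] at this
  have e2 : P y (a + 1) = P y a * (1 - y ^ (2 * (a + 1))) := P_succ a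
  have e3 : P y (c + 1) = P y c * (1 - y ^ (2 * (c + 1))) := P_succ c
  have e4 : P y (k + 2) = P y (k + 1) * (1 - y ^ (2 * (k + 2))) := by
    have := P_succ (y := y) (k + 1); rwa [show k + 1 + 1 = k + 2 from rfl] at this
  have e5 : P y (k + 1) = P y k * (1 - y ^ (2 * (k + 1))) := P_succ k
  rw [e1, e2, e3, e4, e5]
  have na := P_ne hy0 hy1 a
  have nc := P_ne hy0 hy1 c
  have nk := P_ne hy0 hy1 k
  have nak := P_ne hy0 hy1 (a + k + 1)
  have nck := P_ne hy0 hy1 (c + k + 2)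
  have f1 := fac_ne hy0 hy1 a
  have f2 := fac_ne hy0 hy1 c
  have f3 := fac_ne hy0 hy1 k
  have f4 := fac_ne hy0 hy1 (k + 1)
  have f5 := fac_ne hy0 hy1 (a + k + 1)
  field_simp
  ring

noncomputable def gam (y : ℝ) (r s m : ℕ) : ℝ :=
  if m ≤ r then y ^ (2 * ((r - m) * (s - m))) * Q y r m * Q y s m * P y m else 0

noncomputable def del (y : ℝ) (r s m : ℕ) : ℝ :=
  if 1 ≤ m ∧ m ≤ r + 1 ∧ m ≤ s then
    y ^ (2 * ((r + 1 - m) * (s - m) + (r + 1 - m))) * Q y r (m - 1) * Q y s m * P y m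
  else 0

include hy0 hy1 in
lemma gamma_step (r s m : ℕ) (hms : m ≤ s) :
    gam y (r + 1) s m - gam y r s m = del y r s m - del y r s (m + 1) := by
  rw [gam, gam, del, del]
  by_cases h1 : m ≤ r
  · rw [if_pos (by omega : m ≤ r + 1), if_pos h1]
    rcases Nat.eq_zero_or_pos m with rfl | hm
    · -- m = 0
      rw [if_neg (by omega)]
      rcases Nat.eq_zero_or_pos s with rfl | hs
      · -- s = 0
        rw [if_neg (by omega)]
        simp [Q_zero hy0 hy1, Q_self hy0 hy1]
      · obtain ⟨c, rfl⟩ : ∃ c, s = c + 1 := ⟨s - 1, by omega⟩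
        rw [if_pos (by omega)]
        have := case_m0 hy0 hy1 r c
        simp only [Nat.sub_zero] at this ⊢
        rw [show (0:ℕ) + 1 = 1 from rfl]
        linarith [this]
    · obtain ⟨k, rfl⟩ : ∃ k, m = k + 1 := ⟨m - 1, by omega⟩
      obtain ⟨a, rfl⟩ : ∃ a, r = a + k + 1 := ⟨r - (k + 1), by omega⟩
      rw [if_pos (by omega : 1 ≤ k + 1 ∧ k + 1 ≤ a + k + 1 + 1 ∧ k + 1 ≤ s)]
      rcases Nat.lt_or_ge (k + 1) s with hlt | hge
      · -- m < s : main case, s = c + k + 2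
        obtain ⟨c, rfl⟩ : ∃ c, s = c + k + 2 := ⟨s - (k + 2), by omega⟩
        rw [if_pos (by omega)]
        have := case_main hy0 hy1 a c k
        have g1 : a + k + 1 + 1 = a + k + 2 := by omega
        have g2 : a + k + 1 + 1 - (k + 1) = a + 1 := by omega
        have g3 : a + k + 1 - (k + 1) = a := by omega
        have g4 : c + k + 2 - (k + 1) = c + 1 := by omega
        have g5 : k + 1 - 1 = k := by omega
        have g6 : a + k + 1 + 1 - (k + 1 + 1) = a := by omega
        have g7 : c + k + 2 - (k + 1 + 1) = c := by omega
        have g8 : k + 1 + 1 = k + 2 := by omega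
        have g9 : k + 2 - 1 = k + 1 := by omega
        rw [g1, g2, g3, g4, g5, g6, g7, g8, g9]
        convert this using 3 <;> ring_nf
      · -- m = s : pascal case
        have hseq : s = k + 1 := by omega
        subst hseq
        rw [if_neg (by omega)]
        have := case_pascal hy0 hy1 a k
        have g1 : a + k + 1 + 1 = a + k + 2 := by omega
        have g2 : a + k + 1 + 1 - (k + 1) = a + 1 := by omega
        have g3 : a + k + 1 - (k + 1) = a := by omega
        have g4 : k + 1 - (k + 1) = 0 := by omega
        have g5 : k + 1 - 1 = k := by omega
        rw [g1, g2, g3, g4, g5]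
        rw [sub_zero]
        convert this using 3 <;> ring_nf
  · -- m > r
    rw [if_neg h1]
    rcases Nat.lt_or_ge (r + 1) m with hgt | hle
    · rw [if_neg (by omega), if_neg (by omega), if_neg (by omega)]
    · -- m = r + 1
      have hm : m = r + 1 := by omega
      subst hm
      rw [if_pos le_rfl, if_pos (by omega), if_neg (by omega)]
      have g1 : r + 1 - (r + 1) = 0 := by omega
      have g2 : r + 1 - 1 = r := by omega
      rw [g1, g2]
      rw [Q_self hy0 hy1, Q_self hy0 hy1]
      simp

include hy0 hy1 in
lemma G_eq_one (r s : ℕ) : ∑ m ∈ Finset.range (s + 1), gam y r s m = 1 := by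
  induction r with
  | zero =>
    rw [Finset.sum_eq_single 0]
    · rw [gam, if_pos le_rfl, Q_zero hy0 hy1, Q_zero hy0 hy1, P_zero]
      simp
    · intro m _ hm
      rw [gam, if_neg (by omega)]
    · intro h
      exact absurd (Finset.mem_range.2 (by omega)) h
  | succ r ih =>
    have key : ∑ m ∈ Finset.range (s + 1), (gam y (r + 1) s m - gam y r s m) = 0 := by
      have h1 : ∀ m ∈ Finset.range (s + 1), gam y (r + 1) s m - gam y r s m
          = del y r s m - del y r s (m + 1) := by
        intro m hm
        exact gamma_step hy0 hy1 r s m (Nat.lt_succ_iff.1 (Finset.mem_range.1 hm))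
      rw [Finset.sum_congr rfl h1, Finset.sum_range_sub']
      rw [del, if_neg (by omega), del, if_neg (by omega), sub_zero]
    rw [Finset.sum_sub_distrib] at key
    linarith [ih]

lemma F_def (u : ℝ) (a : ℕ) : F y u a = u ^ a * y ^ (a ^ 2 + a) / P y a := rfl

include hy0 hy1 in
lemma c_term (hy : y ≠ 0) (u : ℝ) (a b m : ℕ) :
    u ^ ((m + a) + (m + b)) * y ^ ((m + a) ^ 2 + (m + b) ^ 2 + (m + a) + (m + b))
        * (y⁻¹) ^ (2 * ((m + a) * (m + b))) / (P y (m + a) * P y (m + b))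
      * (y ^ (2 * (a * b)) * Q y (m + a) m * Q y (m + b) m * P y m)
      = F y u a * F y u b * E y (u ^ 2 * y ^ 2) m := by
  rw [Q, Q, F_def, F_def, E]
  have g1 : m + a - m = a := by omega
  have g2 : m + b - m = b := by omega
  rw [g1, g2, inv_pow]
  have na := P_ne hy0 hy1 a
  have nb := P_ne hy0 hy1 b
  have nm := P_ne hy0 hy1 m
  have nma := P_ne hy0 hy1 (m + a)
  have nmb := P_ne hy0 hy1 (m + b)
  field_simp
  ring

include hy0 hy1 in
lemma c_eq_sum (u : ℝ) (r s : ℕ) :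
    u ^ (r + s) * y ^ (r ^ 2 + s ^ 2 + r + s) * (y⁻¹) ^ (2 * (r * s)) / (P y r * P y s)
      = ∑ m ∈ Finset.range (s + 1),
          (if m ≤ r then F y u (r - m) * F y u (s - m) * E y (u ^ 2 * y ^ 2) m else 0) := by
  have hy : y ≠ 0 := hy0.ne'
  conv_lhs => rw [← mul_one (u ^ (r + s) * y ^ (r ^ 2 + s ^ 2 + r + s) * (y⁻¹) ^ (2 * (r * s))
    / (P y r * P y s)), ← G_eq_one hy0 hy1 r s]
  rw [Finset.mul_sum]
  refine Finset.sum_congr rfl fun m hm => ?_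
  have hms : m ≤ s := Nat.lt_succ_iff.1 (Finset.mem_range.1 hm)
  rw [gam]
  by_cases h1 : m ≤ r
  · rw [if_pos h1, if_pos h1]
    obtain ⟨a, rfl⟩ := Nat.le.dest h1
    obtain ⟨b, rfl⟩ := Nat.le.dest hms
    have g1 : m + a - m = a := by omega
    have g2 : m + b - m = b := by omega
    rw [g1, g2]
    exact c_term hy0 hy1 hy u a b m
  · rw [if_neg h1, if_neg h1, mul_zero]

noncomputable def cc (y u : ℝ) (p : ℕ × ℕ) : ℝ :=
  u ^ (p.1 + p.2) * y ^ (p.1 ^ 2 + p.2 ^ 2 + p.1 + p.2) * (y⁻¹) ^ (2 * (p.1 * p.2))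
    / (P y p.1 * P y p.2)

lemma sum_exp (k : ℕ) : ∑ i ∈ Finset.range k, 2 * (i + 1) = k ^ 2 + k := by
  induction k with
  | zero => simp
  | succ k ih => rw [Finset.sum_range_succ, ih]; ring

lemma spOrder_eq {q : ℝ} (hq : q ≠ 0) (k : ℕ) :
    spOrder q k = q ^ (2 * k ^ 2 + k) * P q⁻¹ k := by
  rw [spOrder, P]
  have h : ∀ i ∈ Finset.range k,
      q ^ (2 * (i + 1)) - 1 = q ^ (2 * (i + 1)) * (1 - (q⁻¹) ^ (2 * (i + 1))) := by
    intro i _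
    rw [inv_pow, mul_sub, mul_one, mul_inv_cancel₀ (pow_ne_zero _ hq)]
  rw [Finset.prod_congr rfl h, Finset.prod_mul_distrib, Finset.prod_pow_eq_pow_sum, sum_exp]
  rw [← mul_assoc, ← pow_add]
  congr 1
  ring

lemma term_eq {q u : ℝ} (hq : 1 < q) (r s : ℕ) :
    u ^ (r + s) * q ^ ((r + s) ^ 2) * (1 / (spOrder q r * spOrder q s)) = cc q⁻¹ u (r, s) := by
  have hq0 : (0:ℝ) < q := lt_trans one_pos hq
  have hy0 : (0:ℝ) < q⁻¹ := inv_pos.2 hq0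
  have hy1 : q⁻¹ < 1 := inv_lt_one_of_one_lt₀ hq
  have hqne : q ≠ 0 := hq0.ne'
  rw [spOrder_eq hqne, spOrder_eq hqne, cc]
  have hr := P_ne hy0 hy1 r
  have hs := P_ne hy0 hy1 s
  have hz : (q⁻¹ : ℝ) ≠ 0 := (inv_pos.2 hq0).ne'
  rw [show q = (q⁻¹)⁻¹ from (inv_inv q).symm]
  generalize q⁻¹ = z at *
  simp only [inv_inv, inv_pow]
  field_simp
  ring

set_option maxHeartbeats 1000000 in
include hy0 hy1 in
lemma abs_cc_le {u : ℝ} (p : ℕ × ℕ) :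
    |cc y u p| ≤ ((|u| * y) ^ p.1 / Pc y) * ((|u| * y) ^ p.2 / Pc y) := by
  obtain ⟨r, s⟩ := p
  have hPr := P_pos hy0 hy1 r
  have hPs := P_pos hy0 hy1 s
  have h2 : 2 * (r * s) ≤ r ^ 2 + s ^ 2 := by nlinarith [sq_nonneg (r - s : ℤ), sq_nonneg ((r:ℤ) - s)]
  have hsplit : y ^ (r ^ 2 + s ^ 2 + r + s) = y ^ (r ^ 2 + s ^ 2 - 2 * (r * s)) * y ^ (r + s) * y ^ (2 * (r * s)) := by
    rw [← pow_add, ← pow_add]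
    congr 1
    omega
  have key : y ^ (r ^ 2 + s ^ 2 + r + s) * (y⁻¹) ^ (2 * (r * s)) ≤ y ^ (r + s) := by
    rw [hsplit, inv_pow]
    rw [mul_assoc, mul_assoc, mul_inv_cancel₀ (pow_ne_zero _ hy0.ne'), mul_one]
    calc y ^ (r ^ 2 + s ^ 2 - 2 * (r * s)) * y ^ (r + s) ≤ 1 * y ^ (r + s) := by
          apply mul_le_mul_of_nonneg_right (pow_le_one₀ hy0.le hy1.le) (by positivity)
      _ = y ^ (r + s) := one_mul _
  have habs : |cc y u (r, s)| = |u| ^ (r + s) * (y ^ (r ^ 2 + s ^ 2 + r + s) * (y⁻¹) ^ (2 * (r * s))) / (P y r * P y s) := by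
    rw [cc]
    rw [abs_div, abs_mul, abs_mul, abs_pow, abs_pow, abs_pow, abs_of_pos hy0,
      abs_of_pos (inv_pos.2 hy0), abs_of_pos (mul_pos hPr hPs)]
    ring
  rw [habs]
  have hnum : |u| ^ (r + s) * (y ^ (r ^ 2 + s ^ 2 + r + s) * (y⁻¹) ^ (2 * (r * s)))
      ≤ |u| ^ (r + s) * y ^ (r + s) :=
    mul_le_mul_of_nonneg_left key (pow_nonneg (abs_nonneg u) _)
  have hden : Pc y * Pc y ≤ P y r * P y s :=
    mul_le_mul (Pc_le_P hy0 hy1 r) (Pc_le_P hy0 hy1 s) (Pc_pos).le hPr.le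
  have hPc2 : (0:ℝ) < Pc y * Pc y := mul_pos Pc_pos Pc_pos
  have h1 : |u| ^ (r + s) * (y ^ (r ^ 2 + s ^ 2 + r + s) * (y⁻¹) ^ (2 * (r * s))) / (P y r * P y s)
      ≤ |u| ^ (r + s) * y ^ (r + s) / (Pc y * Pc y) :=
    div_le_div₀ (by positivity) hnum hPc2 hden
  refine h1.trans_eq ?_
  rw [mul_pow, pow_add, pow_add]
  have := (Pc_pos (y := y)).ne'
  field_simp
  ring

set_option maxHeartbeats 1000000 in
include hy0 hy1 in
lemma summable_cc {u : ℝ} (hu : |u| * y < 1) : Summable (cc y u) := by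
  have hb : Summable fun a : ℕ => ‖(|u| * y) ^ a / Pc y‖ := by
    apply Summable.congr ((summable_geometric_of_lt_one (by positivity) hu).div_const (Pc y)).abs
    intro a
    rw [Real.norm_eq_abs]
  have hprod : Summable fun p : ℕ × ℕ => ((|u| * y) ^ p.1 / Pc y) * ((|u| * y) ^ p.2 / Pc y) :=
    summable_mul_of_summable_norm hb hb
  apply Summable.of_norm_bounded hprod
  intro p
  rw [Real.norm_eq_abs]
  exact abs_cc_le hy0 hy1 p
end SpAux

open SpAux in
set_option maxHeartbeats 2000000 in
/-- Sum = product identity for odd characteristic symplectic groups: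
`∑_{n≥0} u^n q^{n²} ∑_{r=0}^n 1/(|Sp(2r,q)| |Sp(2n-2r,q)|)
  = ∏_{i≥1}(1+u/q^{2i})² / ∏_{i≥1}(1-u²/q^{2i})`. -/
theorem sum_eq_product_Sp (q u : ℝ) (hq : 1 < q) (hu : |u| < q) :
    ∑' n : ℕ, u ^ n * q ^ (n ^ 2) *
      ∑ r ∈ Finset.range (n + 1), 1 / (spOrder q r * spOrder q (n - r)) =
      (∏' i : ℕ, (1 + u / q ^ (2 * (i + 1))) ^ 2) / ∏' i : ℕ, (1 - u ^ 2 / q ^ (2 * (i + 1))) := by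
  have hq0 : (0:ℝ) < q := lt_trans one_pos hq
  set y := q⁻¹ with hydef
  have hy0 : 0 < y := inv_pos.2 hq0
  have hy1 : y < 1 := inv_lt_one_of_one_lt₀ hq
  have huy : |u| * y < 1 := by
    have h := mul_lt_mul_of_pos_right hu (inv_pos.2 hq0)
    rwa [mul_inv_cancel₀ hq0.ne'] at h
  have hw : |u ^ 2| * y ^ 2 < 1 := by
    have : |u ^ 2| * y ^ 2 = (|u| * y) ^ 2 := by
      rw [abs_pow, mul_pow]
    rw [this]
    exact pow_lt_one₀ (by positivity) huy (by norm_num)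
  have hsarg : |u ^ 2 * y ^ 2| < 1 := by
    rw [abs_mul, abs_of_nonneg (sq_nonneg y)]
    exact hw
  have hs0 : (0:ℝ) ≤ u ^ 2 * y ^ 2 := by positivity
  -- basic summabilities
  have hFabs := summable_abs_F hy0 hy1 huy
  have hFn : Summable fun a => ‖F y u a‖ := by simpa [Real.norm_eq_abs] using hFabs
  have hEn : Summable fun m => ‖E y (u ^ 2 * y ^ 2) m‖ := by
    simpa [Real.norm_eq_abs] using summable_abs_E hy0 hy1 hsarg
  have hEsum : Summable (E y (u ^ 2 * y ^ 2)) := hEn.of_norm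
  have hFF : Summable fun p : ℕ × ℕ => ‖F y u p.1 * F y u p.2‖ := Summable.mul_norm hFn hFn
  have hS : Summable fun z : (ℕ × ℕ) × ℕ =>
      F y u z.1.1 * F y u z.1.2 * E y (u ^ 2 * y ^ 2) z.2 :=
    summable_mul_of_summable_norm hFF hEn
  -- product of three sums as a triple sum
  have hR1 : (∑' a, F y u a) * (∑' a, F y u a) * (∑' m, E y (u ^ 2 * y ^ 2) m)
      = ∑' z : (ℕ × ℕ) × ℕ, F y u z.1.1 * F y u z.1.2 * E y (u ^ 2 * y ^ 2) z.2 := by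
    rw [tsum_mul_tsum_of_summable_norm hFn hFn, tsum_mul_tsum_of_summable_norm hFF hEn]
  -- reindexing through the injection
  set T : (ℕ × ℕ) × ℕ → ℝ := fun z =>
    if z.2 ≤ z.1.1 ∧ z.2 ≤ z.1.2 then
      F y u (z.1.1 - z.2) * F y u (z.1.2 - z.2) * E y (u ^ 2 * y ^ 2) z.2
    else 0 with hTdef
  set ι : (ℕ × ℕ) × ℕ → (ℕ × ℕ) × ℕ := fun z => ((z.1.1 + z.2, z.1.2 + z.2), z.2) with hιdef
  have hι : Function.Injective ι := by
    intro z w h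
    simp only [hιdef, Prod.mk.injEq] at h
    obtain ⟨⟨h1, h2⟩, h3⟩ := h
    refine Prod.ext (Prod.ext ?_ ?_) h3 <;> omega
  have hTι : ∀ z : (ℕ × ℕ) × ℕ, T (ι z) = F y u z.1.1 * F y u z.1.2 * E y (u ^ 2 * y ^ 2) z.2 := by
    intro z
    simp only [hTdef, hιdef]
    rw [if_pos ⟨Nat.le_add_left _ _, Nat.le_add_left _ _⟩, Nat.add_sub_cancel, Nat.add_sub_cancel]
  have hvan : ∀ z ∉ Set.range ι, T z = 0 := by
    intro z hz
    have hg : ¬(z.2 ≤ z.1.1 ∧ z.2 ≤ z.1.2) := by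
      rintro ⟨h1, h2⟩
      refine hz ⟨((z.1.1 - z.2, z.1.2 - z.2), z.2), ?_⟩
      simp only [hιdef]
      refine Prod.ext (Prod.ext ?_ ?_) rfl <;> simp <;> omega
    simp only [hTdef]
    exact if_neg hg
  have hsupp : Function.support T ⊆ Set.range ι := by
    intro z hz
    by_contra hr
    exact hz (hvan z hr)
  have hsumT : Summable T := by
    refine (hι.summable_iff hvan).1 ?_
    refine hS.congr fun z => ?_
    exact (hTι z).symm
  have hR2 : (∑' z : (ℕ × ℕ) × ℕ, F y u z.1.1 * F y u z.1.2 * E y (u ^ 2 * y ^ 2) z.2)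
      = ∑' z, T z := by
    rw [← hι.tsum_eq hsupp]
    exact tsum_congr fun z => (hTι z).symm
  -- fiberwise evaluation of T
  have hR3 : (∑' z, T z) = ∑' p : ℕ × ℕ, cc y u p := by
    rw [Summable.tsum_prod hsumT]
    refine tsum_congr fun p => ?_
    have hout : ∀ m ∉ Finset.range (p.2 + 1), T (p, m) = 0 := by
      intro m hm
      rw [hTdef]
      simp only
      rw [if_neg]
      rintro ⟨-, h2⟩
      exact hm (Finset.mem_range.2 (by omega))
    rw [tsum_eq_sum hout]
    rw [show cc y u p = u ^ (p.1 + p.2) * y ^ (p.1 ^ 2 + p.2 ^ 2 + p.1 + p.2)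
        * (y⁻¹) ^ (2 * (p.1 * p.2)) / (P y p.1 * P y p.2) from rfl,
      c_eq_sum hy0 hy1 u p.1 p.2]
    refine Finset.sum_congr rfl fun m hm => ?_
    have hms : m ≤ p.2 := Nat.lt_succ_iff.1 (Finset.mem_range.1 hm)
    rw [hTdef]
    simp only
    by_cases h1 : m ≤ p.1
    · rw [if_pos ⟨h1, hms⟩, if_pos h1]
    · rw [if_neg (by tauto), if_neg h1]
  -- left-hand side
  have hcsum : Summable (cc y u) := summable_cc hy0 hy1 huy
  have hL1 : ∑' n : ℕ, u ^ n * q ^ (n ^ 2) *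
      ∑ r ∈ Finset.range (n + 1), 1 / (spOrder q r * spOrder q (n - r))
      = ∑' n : ℕ, ∑ p ∈ Finset.HasAntidiagonal.antidiagonal n, cc y u p := by
    refine tsum_congr fun n => ?_
    rw [Finset.Nat.sum_antidiagonal_eq_sum_range_succ_mk, Finset.mul_sum]
    refine Finset.sum_congr rfl fun r hr => ?_
    have hrn : r ≤ n := Nat.lt_succ_iff.1 (Finset.mem_range.1 hr)
    have hsplit : r + (n - r) = n := by omega
    calc u ^ n * q ^ (n ^ 2) * (1 / (spOrder q r * spOrder q (n - r)))
        = u ^ (r + (n - r)) * q ^ ((r + (n - r)) ^ 2) * (1 / (spOrder q r * spOrder q (n - r))) := by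
          rw [hsplit]
      _ = cc q⁻¹ u (r, n - r) := term_eq hq r (n - r)
  have hL2 : ∑' n : ℕ, ∑ p ∈ Finset.HasAntidiagonal.antidiagonal n, cc y u p = ∑' p : ℕ × ℕ, cc y u p := by
    have hsig : Summable fun σ : Σ n : ℕ, Finset.HasAntidiagonal.antidiagonal n => cc y u σ.2 :=
      Finset.HasAntidiagonal.sigmaAntidiagonalEquivProd.summable_iff.2 hcsum
    calc ∑' n : ℕ, ∑ p ∈ Finset.HasAntidiagonal.antidiagonal n, cc y u p
        = ∑' (n : ℕ) (p : Finset.HasAntidiagonal.antidiagonal n), cc y u p :=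
          tsum_congr fun n => (Finset.tsum_subtype (Finset.HasAntidiagonal.antidiagonal n) (cc y u)).symm
      _ = ∑' σ : Σ n : ℕ, Finset.HasAntidiagonal.antidiagonal n, cc y u σ.2 := (Summable.tsum_sigma hsig).symm
      _ = ∑' p : ℕ × ℕ, cc y u p := Finset.HasAntidiagonal.sigmaAntidiagonalEquivProd.tsum_eq (cc y u)
  -- right-hand side : numerator
  have hfac : ∀ i : ℕ, u / q ^ (2 * (i + 1)) = u * y ^ (2 * (i + 1)) := by
    intro i
    rw [hydef, inv_pow, div_eq_mul_inv]
  have hm : Multipliable fun i : ℕ => 1 + u * y ^ (2 * (i + 1)) :=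
    multipliable_one_add (summable_geom_shift hy0 hy1 u) (abs_term_le hy0 hy1) huy
  have hnum : (∏' i : ℕ, (1 + u / q ^ (2 * (i + 1))) ^ 2)
      = (∑' a, F y u a) * (∑' a, F y u a) := by
    calc (∏' i : ℕ, (1 + u / q ^ (2 * (i + 1))) ^ 2)
        = ∏' i : ℕ, ((1 + u * y ^ (2 * (i + 1))) * (1 + u * y ^ (2 * (i + 1)))) := by
          refine tprod_congr fun i => ?_
          rw [hfac i, sq]
      _ = (∏' i : ℕ, (1 + u * y ^ (2 * (i + 1)))) * ∏' i : ℕ, (1 + u * y ^ (2 * (i + 1))) :=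
          Multipliable.tprod_mul hm hm
      _ = (∑' a, F y u a) * (∑' a, F y u a) := by rw [tprod_g hy0 hy1 huy]
  -- right-hand side : denominator
  have hfac2 : ∀ i : ℕ, u ^ 2 / q ^ (2 * (i + 1)) = u ^ 2 * y ^ (2 * (i + 1)) := by
    intro i
    rw [hydef, inv_pow, div_eq_mul_inv]
  have hden0 : (∏' i : ℕ, (1 - u ^ 2 / q ^ (2 * (i + 1)))) * (∑' m, E y (u ^ 2 * y ^ 2) m) = 1 := by
    have h := tprod_e hy0 hy1 (w := u ^ 2) hw
    have hcong : (∏' i : ℕ, (1 - u ^ 2 / q ^ (2 * (i + 1))))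
        = ∏' i : ℕ, (1 - u ^ 2 * y ^ (2 * (i + 1))) :=
      tprod_congr fun i => by rw [hfac2 i]
    rw [hcong]
    exact h
  have hE1 : (1:ℝ) ≤ ∑' m, E y (u ^ 2 * y ^ 2) m := by
    have h0 : E y (u ^ 2 * y ^ 2) 0 = 1 := E_zero _
    calc (1:ℝ) = E y (u ^ 2 * y ^ 2) 0 := h0.symm
      _ ≤ ∑' m, E y (u ^ 2 * y ^ 2) m := by
          refine Summable.le_tsum hEsum 0 fun m _ => ?_
          rw [E]
          exact div_nonneg (pow_nonneg hs0 m) (P_pos hy0 hy1 m).le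
  have hEne : (∑' m, E y (u ^ 2 * y ^ 2) m) ≠ 0 := by linarith
  have hden : (∏' i : ℕ, (1 - u ^ 2 / q ^ (2 * (i + 1))))
      = (∑' m, E y (u ^ 2 * y ^ 2) m)⁻¹ := by
    rw [inv_eq_one_div, eq_div_iff hEne]
    exact hden0
  rw [hL1, hL2, hnum, hden, div_eq_mul_inv, inv_inv]
  rw [← hR3, ← hR2, ← hR1]
end

section
/- Let q be a power of 2, V a 2n-dimensional vector space over F_q with nondegenerate quadratic form of minus type (n ≥ 1), and G = O^-(2n,q) its isometry group. Then G contains no involution g with g^2 = 1 such that (g-1)V is a totally singular subspace of dimension n on which the associated alternating form restricts to zero and the corresponding symmetric matrix is alternating of full rank n; equivalently, the class C(n) of Sp(2n,q) (involutions of skew type and rank n, n even) does not meet O^-(2n,q). -/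
open LinearMap (BilinForm)

/-- Over a finite field of characteristic `2`, an orthogonal group of minus type in dimension
`2n` (`n` even, `n ≥ 1`) contains no involution `g` with `W = (g-1)V` of dimension `n`, with the
associated alternating form vanishing identically on `W`, and with the corresponding symmetric
matrix alternating (i.e. `B(v, gv) = 0` for all `v`); in other words, the symplectic class
`C(n)` does not meet `O^-(2n,q)`. -/
theorem no_skew_rank_n_involution_in_O_minus (q : ℕ) (hq : ∃ k : ℕ, 0 < k ∧ q = 2 ^ k)
    (F : Type*) [Field F] [Fintype F] (hF : Fintype.card F = q) [CharP F 2]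
    (V : Type*) [AddCommGroup V] [Module F V] [FiniteDimensional F V]
    (n : ℕ) (hn : 1 ≤ n) (hneven : Even n) (hdim : Module.finrank F V = 2 * n)
    (Q : QuadraticForm F V) (hnd : (QuadraticMap.polarBilin Q).Nondegenerate)
    (hminus : ∀ W : Submodule F V, (∀ w ∈ W, Q w = 0) → Module.finrank F W < n) :
    ¬ ∃ g : V ≃ₗ[F] V, (∀ v, Q (g v) = Q v) ∧ g ^ 2 = 1 ∧
      Module.finrank F (LinearMap.range ((g : V →ₗ[F] V) - LinearMap.id)) = n ∧
      (∀ x ∈ LinearMap.range ((g : V →ₗ[F] V) - LinearMap.id),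
        ∀ y ∈ LinearMap.range ((g : V →ₗ[F] V) - LinearMap.id),
          QuadraticMap.polarBilin Q x y = 0) ∧
      (∀ v, QuadraticMap.polarBilin Q v (g v) = 0) := by
  rintro ⟨g, hQ, -, hrank, -, halt⟩
  have hsing : ∀ w ∈ LinearMap.range ((g : V →ₗ[F] V) - LinearMap.id), Q w = 0 := by
    rintro w ⟨v, rfl⟩
    simp only [LinearMap.sub_apply, LinearMap.id_apply, LinearEquiv.coe_coe]
    have h2 : g v - v = g v + v := by
      rw [sub_eq_add_neg, neg_eq_of_add_eq_zero_left (by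
        rw [← two_smul F v, show (2 : F) = 0 from CharTwo.two_eq_zero, zero_smul])]
    have hp : QuadraticMap.polar Q (g v) v = 0 := by
      have := halt v
      simpa [QuadraticMap.polarBilin, QuadraticMap.polar_comm] using this
    have hadd : Q (g v + v) = Q (g v) + Q v + QuadraticMap.polar Q (g v) v := by
      simp [QuadraticMap.polar]
    rw [h2, hadd, hp, hQ, add_zero, ← two_smul F (Q v),
      show (2 : F) = 0 from CharTwo.two_eq_zero, zero_smul]
  have := hminus _ hsing
  omega
end
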